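/- arXiv:2410.08838 — 6 statements merged into one kernel-verified Lean document; each statement's English description precedes it below -/
import Mathlib

section
/- Let H be an infinite-dimensional complex separable Hilbert space and let T be a bounded linear operator on H that is hypercyclic. Then T satisfies property (UW_E) if and only if E(T) = ∅. -/
noncomputable section

open Set MeasureTheory

/-- The operator `T - λ·I`. -/
def opShift {E : Type*} [NormedAddCommGroup E] [InnerProductSpace ℂ E]
    (T : E →L[ℂ] E) (lam : ℂ) : E →L[ℂ] E :=
  T - lam • ContinuousLinearMap.id ℂ E

/-- Upper semi-Fredholm: closed range and finite-dimensional kernel. -/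
def IsUSF {E : Type*} [NormedAddCommGroup E] [InnerProductSpace ℂ E]
    (T : E →L[ℂ] E) : Prop :=
  IsClosed (LinearMap.range (T : E →ₗ[ℂ] E) : Set E) ∧ FiniteDimensional ℂ (LinearMap.ker (T : E →ₗ[ℂ] E))

/-- Lower semi-Fredholm: closed range and finite codimension. -/
def IsLSF {E : Type*} [NormedAddCommGroup E] [InnerProductSpace ℂ E]
    (T : E →L[ℂ] E) : Prop :=
  IsClosed (LinearMap.range (T : E →ₗ[ℂ] E) : Set E) ∧ FiniteDimensional ℂ (E ⧸ LinearMap.range (T : E →ₗ[ℂ] E))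

/-- Fredholm operator. -/
def IsFredholmOp {E : Type*} [NormedAddCommGroup E] [InnerProductSpace ℂ E]
    (T : E →L[ℂ] E) : Prop :=
  IsUSF T ∧ IsLSF T

/-- `ind T ≤ 0`, i.e. `dim ker T ≤ codim ran T`. -/
def indexNonpos {E : Type*} [NormedAddCommGroup E] [InnerProductSpace ℂ E]
    (T : E →L[ℂ] E) : Prop :=
  Module.rank ℂ (LinearMap.ker (T : E →ₗ[ℂ] E)) ≤ Module.rank ℂ (E ⧸ LinearMap.range (T : E →ₗ[ℂ] E))

/-- `ind T = 0`, i.e. `dim ker T = codim ran T`. -/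
def indexZero {E : Type*} [NormedAddCommGroup E] [InnerProductSpace ℂ E]
    (T : E →L[ℂ] E) : Prop :=
  Module.rank ℂ (LinearMap.ker (T : E →ₗ[ℂ] E)) = Module.rank ℂ (E ⧸ LinearMap.range (T : E →ₗ[ℂ] E))

/-- The approximate point spectrum: `λ` such that `T - λ` is not bounded below. -/
def specA {E : Type*} [NormedAddCommGroup E] [InnerProductSpace ℂ E]
    (T : E →L[ℂ] E) : Set ℂ :=
  {lam | ¬ ∃ c > 0, ∀ x : E, c * ‖x‖ ≤ ‖T x - lam • x‖}

/-- The upper semi-Weyl spectrum. -/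
def specUW {E : Type*} [NormedAddCommGroup E] [InnerProductSpace ℂ E]
    (T : E →L[ℂ] E) : Set ℂ :=
  {lam | ¬ (IsUSF (opShift T lam) ∧ indexNonpos (opShift T lam))}

/-- The Weyl spectrum. -/
def specW {E : Type*} [NormedAddCommGroup E] [InnerProductSpace ℂ E]
    (T : E →L[ℂ] E) : Set ℂ :=
  {lam | ¬ (IsFredholmOp (opShift T lam) ∧ indexZero (opShift T lam))}

/-- `lam` is an isolated point of the set `S`. -/
def IsIsolatedIn (S : Set ℂ) (lam : ℂ) : Prop :=
  lam ∈ S ∧ ∃ ε > 0, S ∩ Metric.ball lam ε = {lam}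

/-- `E(T)`: the isolated points of the spectrum that are eigenvalues. -/
def Eset {E : Type*} [NormedAddCommGroup E] [InnerProductSpace ℂ E]
    (T : E →L[ℂ] E) : Set ℂ :=
  {lam | IsIsolatedIn (spectrum ℂ T) lam ∧ ∃ x : E, x ≠ 0 ∧ T x = lam • x}

/-- `E₀(T)`: the isolated points of the spectrum that are eigenvalues of finite multiplicity. -/
def E0set {E : Type*} [NormedAddCommGroup E] [InnerProductSpace ℂ E]
    (T : E →L[ℂ] E) : Set ℂ :=
  {lam | IsIsolatedIn (spectrum ℂ T) lam ∧ (∃ x : E, x ≠ 0 ∧ T x = lam • x) ∧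
    FiniteDimensional ℂ (LinearMap.ker (opShift T lam : E →ₗ[ℂ] E))}

/-- Property `(UW_E)`: `σ_a(T) \ σ_uw(T) = E(T)`. -/
def PropUWE {E : Type*} [NormedAddCommGroup E] [InnerProductSpace ℂ E]
    (T : E →L[ℂ] E) : Prop :=
  specA T \ specUW T = Eset T

/-- Property `(V_E)`: `σ(T) \ σ_uw(T) = E(T)`. -/
def PropVE {E : Type*} [NormedAddCommGroup E] [InnerProductSpace ℂ E]
    (T : E →L[ℂ] E) : Prop :=
  spectrum ℂ T \ specUW T = Eset T

/-- Property `(W_E)`: `σ(T) \ σ_w(T) = E(T)`. -/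
def PropWE {E : Type*} [NormedAddCommGroup E] [InnerProductSpace ℂ E]
    (T : E →L[ℂ] E) : Prop :=
  spectrum ℂ T \ specW T = Eset T

/-- Weyl's theorem: `σ(T) \ σ_w(T) = E₀(T)`. -/
def WeylsTheorem {E : Type*} [NormedAddCommGroup E] [InnerProductSpace ℂ E]
    (T : E →L[ℂ] E) : Prop :=
  spectrum ℂ T \ specW T = E0set T

/-- `T` is hypercyclic: some orbit is dense. -/
def Hypercyclic {E : Type*} [NormedAddCommGroup E] [InnerProductSpace ℂ E]
    (T : E →L[ℂ] E) : Prop :=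
  ∃ x : E, Dense (Set.range fun n : ℕ => (T ^ n) x)

/-- `T` is supercyclic: the scaled orbit of some vector is dense. -/
def Supercyclic {E : Type*} [NormedAddCommGroup E] [InnerProductSpace ℂ E]
    (T : E →L[ℂ] E) : Prop :=
  ∃ x : E, Dense {y : E | ∃ (c : ℂ) (n : ℕ), y = c • (T ^ n) x}

/-- The ascent of `T`, as an extended natural number. -/
def ascent {E : Type*} [NormedAddCommGroup E] [InnerProductSpace ℂ E]
    (T : E →L[ℂ] E) : ℕ∞ :=
  sInf ((fun n : ℕ => (n : ℕ∞)) '' {n : ℕ | LinearMap.ker ((T ^ n : E →L[ℂ] E) : E →ₗ[ℂ] E) = LinearMap.ker ((T ^ (n + 1) : E →L[ℂ] E) : E →ₗ[ℂ] E)})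

/-- The descent of `T`, as an extended natural number. -/
def descent {E : Type*} [NormedAddCommGroup E] [InnerProductSpace ℂ E]
    (T : E →L[ℂ] E) : ℕ∞ :=
  sInf ((fun n : ℕ => (n : ℕ∞)) ''
    {n : ℕ | LinearMap.range ((T ^ n : E →L[ℂ] E) : E →ₗ[ℂ] E) = LinearMap.range ((T ^ (n + 1) : E →L[ℂ] E) : E →ₗ[ℂ] E)})

/-- Browder operator: Fredholm with equal finite ascent and descent. -/
def IsBrowder {E : Type*} [NormedAddCommGroup E] [InnerProductSpace ℂ E]
    (T : E →L[ℂ] E) : Prop :=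
  IsFredholmOp T ∧ ascent T = descent T ∧ ascent T < ⊤

/-- The Browder spectrum. -/
def specB {E : Type*} [NormedAddCommGroup E] [InnerProductSpace ℂ E]
    (T : E →L[ℂ] E) : Set ℂ :=
  {lam | ¬ IsBrowder (opShift T lam)}

/-- The essential spectrum. -/
def specE {E : Type*} [NormedAddCommGroup E] [InnerProductSpace ℂ E]
    (T : E →L[ℂ] E) : Set ℂ :=
  {lam | ¬ IsFredholmOp (opShift T lam)}

/-- The left essential spectrum. -/
def specLE {E : Type*} [NormedAddCommGroup E] [InnerProductSpace ℂ E]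
    (T : E →L[ℂ] E) : Set ℂ :=
  {lam | ¬ IsUSF (opShift T lam)}

/-- The right essential spectrum. -/
def specRE {E : Type*} [NormedAddCommGroup E] [InnerProductSpace ℂ E]
    (T : E →L[ℂ] E) : Set ℂ :=
  {lam | ¬ IsLSF (opShift T lam)}


lemma not_dense_geom (lam c : ℂ) :
    ¬ Dense {z : ℂ | ∃ n : ℕ, z = lam ^ n * c} := by
  intro h
  by_cases hc : c = 0
  · obtain ⟨b, hbs, hb⟩ := Metric.mem_closure_iff.mp (h.closure_eq ▸ Set.mem_univ (1:ℂ)) (1/2) (by norm_num)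
    obtain ⟨n, rfl⟩ := hbs
    simp [hc] at hb
    norm_num at hb
  · have hcpos : (0:ℝ) < ‖c‖ := norm_pos_iff.mpr hc
    rcases le_or_gt ‖lam‖ 1 with hl | hl
    · obtain ⟨b, hbs, hb⟩ := Metric.mem_closure_iff.mp (h.closure_eq ▸ Set.mem_univ (2*c)) ‖c‖ hcpos
      obtain ⟨n, rfl⟩ := hbs
      have h1 : ‖lam ^ n * c‖ ≤ ‖c‖ := by
        rw [norm_mul, norm_pow]
        calc ‖lam‖^n * ‖c‖ ≤ 1 * ‖c‖ := by
              exact mul_le_mul_of_nonneg_right (pow_le_one₀ (norm_nonneg _) hl) (norm_nonneg _)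
          _ = ‖c‖ := one_mul _
      have h2 : ‖(2*c) - lam^n*c‖ ≥ ‖2*c‖ - ‖lam^n*c‖ := norm_sub_norm_le _ _
      rw [dist_eq_norm] at hb
      have : ‖(2:ℂ)*c‖ = 2*‖c‖ := by simp
      linarith [h2.trans_lt' (by linarith : ‖2*c‖ - ‖lam^n*c‖ > ‖c‖ - ‖c‖)]
    · obtain ⟨b, hbs, hb⟩ := Metric.mem_closure_iff.mp (h.closure_eq ▸ Set.mem_univ (0:ℂ)) ‖c‖ hcpos
      obtain ⟨n, rfl⟩ := hbs
      rw [dist_eq_norm, zero_sub, norm_neg, norm_mul, norm_pow] at hb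
      have : (1:ℝ) ≤ ‖lam‖^n := one_le_pow₀ hl.le
      nlinarith

lemma dense_range_opShift {H : Type*} [NormedAddCommGroup H] [InnerProductSpace ℂ H]
    [CompleteSpace H] (T : H →L[ℂ] H) (hT : Hypercyclic T) (lam : ℂ) :
    Dense (LinearMap.range (opShift T lam : H →ₗ[ℂ] H) : Set H) := by
  by_contra hd
  set M := (LinearMap.range (opShift T lam : H →ₗ[ℂ] H)).topologicalClosure with hM
  have hMtop : M ≠ ⊤ := by
    intro h
    apply hd
    have : (closure (LinearMap.range (opShift T lam : H →ₗ[ℂ] H) : Set H)) = Set.univ := by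
      have := congrArg (fun (S : Submodule ℂ H) => (S : Set H)) h
      rw [← Submodule.topologicalClosure_coe, ← hM, h]; simp
    rwa [dense_iff_closure_eq]
  haveI : CompleteSpace M :=
    (LinearMap.range (opShift T lam : H →ₗ[ℂ] H)).isClosed_topologicalClosure.completeSpace_coe
  have : Mᗮ ≠ ⊥ := fun h => hMtop (Submodule.orthogonal_eq_bot_iff.mp h)
  obtain ⟨y, hyM, hy0⟩ := Submodule.exists_mem_ne_zero_of_ne_bot this
  -- f z = ⟪y, z⟫ kills range of opShift
  have hker : ∀ z : H, (inner ℂ y (opShift T lam z) : ℂ) = 0 := by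
    intro z
    have hz : opShift T lam z ∈ M :=
      (LinearMap.range (opShift T lam : H →ₗ[ℂ] H)).le_topologicalClosure ⟨z, rfl⟩
    have := (Submodule.mem_orthogonal M y).mp hyM _ hz
    rw [← inner_conj_symm, this, map_zero]
  have hstep : ∀ z : H, (inner ℂ y (T z) : ℂ) = lam * inner ℂ y z := by
    intro z
    have := hker z
    simp only [opShift, ContinuousLinearMap.sub_apply, ContinuousLinearMap.smul_apply,
      ContinuousLinearMap.id_apply, inner_sub_right, inner_smul_right] at this
    linear_combination this
  obtain ⟨x, hx⟩ := hT
  have horb : ∀ n : ℕ, (inner ℂ y ((T ^ n) x) : ℂ) = lam ^ n * inner ℂ y x := by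
    intro n
    induction n with
    | zero => simp
    | succ n ih =>
        rw [pow_succ', ContinuousLinearMap.mul_apply, hstep, ih, pow_succ']
        ring
  have hsurj : Function.Surjective (fun z : H => (inner ℂ y z : ℂ)) := by
    intro c
    refine ⟨(c / (inner ℂ y y : ℂ)) • y, ?_⟩
    show (inner ℂ y ((c / (inner ℂ y y : ℂ)) • y) : ℂ) = c
    rw [inner_smul_right, div_mul_cancel₀]
    exact inner_self_ne_zero.mpr hy0
  have hcont : Continuous (fun z : H => (inner ℂ y z : ℂ)) := continuous_const.inner continuous_id
  have hdense : Dense ((fun z : H => (inner ℂ y z : ℂ)) '' Set.range fun n : ℕ => (T ^ n) x) :=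
    hsurj.denseRange.dense_image hcont hx
  have hsub : ((fun z : H => (inner ℂ y z : ℂ)) '' Set.range fun n : ℕ => (T ^ n) x) ⊆
      {z : ℂ | ∃ n : ℕ, z = lam ^ n * inner ℂ y x} := by
    rintro w ⟨_, ⟨n, rfl⟩, rfl⟩
    exact ⟨n, horb n⟩
  exact not_dense_geom lam (inner ℂ y x) (hdense.mono hsub)

lemma specA_diff_specUW_empty {H : Type*} [NormedAddCommGroup H] [InnerProductSpace ℂ H]
    [CompleteSpace H] (T : H →L[ℂ] H) (hT : Hypercyclic T) :
    specA T \ specUW T = ∅ := by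
  ext lam
  simp only [Set.mem_diff, Set.mem_empty_iff_false, iff_false, not_and, not_not]
  intro hA
  rintro ⟨⟨hcl, hfd⟩, hind⟩
  apply hA
  have hdense := dense_range_opShift T hT lam
  have htop : LinearMap.range (opShift T lam : H →ₗ[ℂ] H) = ⊤ := by
    rw [Submodule.eq_top_iff']
    intro z
    have hz : z ∈ closure (LinearMap.range (opShift T lam : H →ₗ[ℂ] H) : Set H) := by
      rw [hdense.closure_eq]; trivial
    rwa [hcl.closure_eq] at hz
  haveI hq : Subsingleton (H ⧸ LinearMap.range (opShift T lam : H →ₗ[ℂ] H)) :=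
    Submodule.Quotient.subsingleton_iff.mpr htop
  have hrank0 : Module.rank ℂ (H ⧸ LinearMap.range (opShift T lam : H →ₗ[ℂ] H)) = 0 :=
    rank_subsingleton' ℂ _
  have hkerbot : LinearMap.ker (opShift T lam : H →ₗ[ℂ] H) = ⊥ := by
    rw [← Submodule.rank_eq_zero (R := ℂ)]
    exact le_antisymm (hind.trans_eq hrank0) zero_le
  set e := ContinuousLinearEquiv.ofBijective (opShift T lam) hkerbot htop with he
  have hal := e.antilipschitz
  set K : ℝ := max (‖(e.symm : H →L[ℂ] H)‖₊ : ℝ) 1 with hK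
  have hK1 : (1:ℝ) ≤ K := le_max_right _ _
  have hKpos : (0:ℝ) < K := lt_of_lt_of_le one_pos hK1
  refine ⟨K⁻¹, by positivity, fun x => ?_⟩
  have hbd : ‖x‖ ≤ (‖(e.symm : H →L[ℂ] H)‖₊ : ℝ) * ‖e x‖ := by
    have := hal.le_mul_dist x 0
    simpa [dist_eq_norm, map_zero] using this
  have hex : (e x : H) = T x - lam • x := by
    show opShift T lam x = T x - lam • x
    simp [opShift]
  have h2 : ‖x‖ ≤ K * ‖e x‖ := by
    refine hbd.trans ?_
    exact mul_le_mul_of_nonneg_right (le_max_left _ _) (norm_nonneg _)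
  rw [← hex]
  calc K⁻¹ * ‖x‖ ≤ K⁻¹ * (K * ‖e x‖) := by
        exact mul_le_mul_of_nonneg_left h2 (by positivity)
    _ = ‖e x‖ := by field_simp

/-- a hypercyclic operator on an infinite-dimensional complex separable
Hilbert space satisfies property `(UW_E)` iff `E(T) = ∅`. -/
theorem hypercyclic_propUWE_iff_Eset_empty
    {H : Type*} [NormedAddCommGroup H] [InnerProductSpace ℂ H] [CompleteSpace H]
    [TopologicalSpace.SeparableSpace H] (hinf : ¬ FiniteDimensional ℂ H)
    (T : H →L[ℂ] H) (hT : Hypercyclic T) :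
    PropUWE T ↔ Eset T = ∅ := by
  unfold PropUWE
  rw [specA_diff_specUW_empty T hT]
  exact eq_comm
end
end

section
/- Let H be an infinite-dimensional complex separable Hilbert space and T a bounded linear operator on H. Then T satisfies property (UW_E) if and only if all three of the following hold: T satisfies Weyl's theorem, σ_w(T) \ σ_uw(T) = σ(T) \ σ_a(T), and E(T) = E₀(T). -/
noncomputable section

open Set MeasureTheory

set_option linter.unusedSectionVars false
set_option maxHeartbeats 1000000

section AuxLemmas

variable {H : Type*} [NormedAddCommGroup H] [InnerProductSpace ℂ H] [CompleteSpace H]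

lemma opShift_apply (T : H →L[ℂ] H) (lam : ℂ) (x : H) :
    opShift T lam x = T x - lam • x := by
  simp [opShift]

lemma isUnit_opShift_iff (T : H →L[ℂ] H) (lam : ℂ) :
    IsUnit (opShift T lam) ↔ lam ∉ spectrum ℂ T := by
  rw [spectrum.mem_iff, not_not]
  have h : (algebraMap ℂ (H →L[ℂ] H)) lam - T = -(opShift T lam) := by
    simp only [opShift, Algebra.algebraMap_eq_smul_one, ContinuousLinearMap.one_def]
    abel
  rw [h]
  exact ⟨IsUnit.neg, fun h2 => by simpa using h2.neg⟩

lemma unit_inv_eq (u : (H →L[ℂ] H)ˣ) (x : H) :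
    (↑u : H →L[ℂ] H) ((↑u⁻¹ : H →L[ℂ] H) x) = x := by
  rw [← ContinuousLinearMap.mul_apply, Units.mul_inv, ContinuousLinearMap.one_apply]

lemma unit_inv_eq' (u : (H →L[ℂ] H)ˣ) (x : H) :
    (↑u⁻¹ : H →L[ℂ] H) ((↑u : H →L[ℂ] H) x) = x := by
  rw [← ContinuousLinearMap.mul_apply, Units.inv_mul, ContinuousLinearMap.one_apply]

lemma isUnit_iff_bijective (A : H →L[ℂ] H) :
    IsUnit A ↔ LinearMap.ker (A : H →ₗ[ℂ] H) = ⊥ ∧ LinearMap.range (A : H →ₗ[ℂ] H) = ⊤ := by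
  constructor
  · rintro ⟨u, rfl⟩
    constructor
    · refine le_antisymm ?_ bot_le
      intro x hx
      have hx0 : (↑u : H →L[ℂ] H) x = 0 := hx
      have h2 := unit_inv_eq' u x
      rw [hx0] at h2
      simpa [Submodule.mem_bot] using h2.symm
    · rw [eq_top_iff]
      intro y _
      exact ⟨(↑u⁻¹ : H →L[ℂ] H) y, unit_inv_eq u y⟩
  · rintro ⟨h1, h2⟩
    let e := ContinuousLinearEquiv.ofBijective A h1 h2
    refine ⟨⟨A, (e.symm : H →L[ℂ] H), ?_, ?_⟩, rfl⟩
    · ext x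
      exact e.apply_symm_apply x
    · ext x
      exact e.symm_apply_apply x

lemma quotient_rank_zero_iff (R : Submodule ℂ H) :
    Module.rank ℂ (H ⧸ R) = 0 ↔ R = ⊤ := by
  rw [rank_eq_zero_iff, ← Submodule.Quotient.subsingleton_iff]
  constructor
  · intro h
    refine ⟨fun x y => ?_⟩
    obtain ⟨a, ha, hax⟩ := h (x - y)
    have : x - y = 0 := by
      have := congrArg (fun z => a⁻¹ • z) hax
      simpa [smul_smul, inv_mul_cancel₀ ha] using this
    exact sub_eq_zero.mp this
  · intro h x
    exact ⟨1, one_ne_zero, by rw [Subsingleton.elim x 0, smul_zero]⟩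

lemma mem_specA_iff (T : H →L[ℂ] H) (lam : ℂ) :
    lam ∈ specA T ↔ ¬ ∃ c > 0, ∀ x : H, c * ‖x‖ ≤ ‖opShift T lam x‖ := by
  simp only [specA, Set.mem_setOf_eq, opShift_apply]

lemma mem_eigen_iff (T : H →L[ℂ] H) (lam : ℂ) (x : H) :
    T x = lam • x ↔ x ∈ LinearMap.ker (opShift T lam : H →ₗ[ℂ] H) := by
  rw [LinearMap.mem_ker, ContinuousLinearMap.coe_coe, opShift_apply, sub_eq_zero]

lemma mem_specA_of_eigen (T : H →L[ℂ] H) (lam : ℂ)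
    (h : ∃ x : H, x ≠ 0 ∧ T x = lam • x) : lam ∈ specA T := by
  obtain ⟨x, hx, hTx⟩ := h
  rw [mem_specA_iff]
  rintro ⟨c, hc, hb⟩
  have h1 := hb x
  rw [opShift_apply, hTx, sub_self, norm_zero] at h1
  have h2 : 0 < ‖x‖ := norm_pos_iff.mpr hx
  nlinarith

lemma specA_subset_spectrum (T : H →L[ℂ] H) : specA T ⊆ spectrum ℂ T := by
  intro lam h
  by_contra hs
  have hu := (isUnit_opShift_iff T lam).mpr hs
  obtain ⟨u, hu⟩ := hu
  rw [mem_specA_iff] at h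
  apply h
  refine ⟨(‖(↑u⁻¹ : H →L[ℂ] H)‖ + 1)⁻¹, by positivity, fun x => ?_⟩
  have h1 : ‖x‖ ≤ (‖(↑u⁻¹ : H →L[ℂ] H)‖ + 1) * ‖opShift T lam x‖ := by
    have h2 : (↑u⁻¹ : H →L[ℂ] H) (opShift T lam x) = x := by
      rw [← hu]; exact unit_inv_eq' u x
    calc ‖x‖ = ‖(↑u⁻¹ : H →L[ℂ] H) (opShift T lam x)‖ := by rw [h2]
    _ ≤ ‖(↑u⁻¹ : H →L[ℂ] H)‖ * ‖opShift T lam x‖ := ContinuousLinearMap.le_opNorm _ _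
    _ ≤ (‖(↑u⁻¹ : H →L[ℂ] H)‖ + 1) * ‖opShift T lam x‖ := by
        have := norm_nonneg (opShift T lam x); nlinarith
  rw [inv_mul_le_iff₀ (by positivity)]
  exact h1

lemma boundedBelow_data (T : H →L[ℂ] H) (lam : ℂ) (h : lam ∉ specA T) :
    LinearMap.ker (opShift T lam : H →ₗ[ℂ] H) = ⊥ ∧ IsClosed (LinearMap.range (opShift T lam : H →ₗ[ℂ] H) : Set H) := by
  rw [mem_specA_iff, not_not] at h
  obtain ⟨c, hc, hb⟩ := h
  constructor
  · refine le_antisymm ?_ bot_le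
    intro x hx
    have hx0 : opShift T lam x = 0 := hx
    have := hb x
    rw [hx0, norm_zero] at this
    have : ‖x‖ ≤ 0 := by nlinarith
    simpa [Submodule.mem_bot] using norm_le_zero_iff.mp this
  · have hal : AntilipschitzWith ⟨c⁻¹, le_of_lt (by positivity)⟩ (opShift T lam) := by
      apply AddMonoidHomClass.antilipschitz_of_bound
      intro x
      have := hb x
      show ‖x‖ ≤ c⁻¹ * _
      have h3 := mul_le_mul_of_nonneg_left this (le_of_lt (inv_pos.mpr hc))
      rw [← mul_assoc, inv_mul_cancel₀ hc.ne', one_mul] at h3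
      exact h3
    have hcl := hal.isClosed_range (opShift T lam).uniformContinuous
    convert hcl using 1; ext y; simp
  
lemma not_specUW_of_not_specA (T : H →L[ℂ] H) (lam : ℂ) (h : lam ∉ specA T) :
    lam ∉ specUW T := by
  obtain ⟨hk, hcl⟩ := boundedBelow_data T lam h
  rw [specUW, Set.mem_setOf_eq, not_not]
  refine ⟨⟨hcl, by rw [hk]; infer_instance⟩, ?_⟩
  rw [indexNonpos, hk]
  simp [rank_bot]

lemma fredholmZero_of_isUnit (A : H →L[ℂ] H) (h : IsUnit A) :
    (IsFredholmOp A ∧ indexZero A) := by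
  obtain ⟨h1, h2⟩ := (isUnit_iff_bijective A).mp h
  have hq : Module.rank ℂ (H ⧸ LinearMap.range (A : H →ₗ[ℂ] H)) = 0 :=
    (quotient_rank_zero_iff _).mpr h2
  have hqf : FiniteDimensional ℂ (H ⧸ LinearMap.range (A : H →ₗ[ℂ] H)) :=
    Module.rank_lt_aleph0_iff.mp (by rw [hq]; exact Cardinal.aleph0_pos)
  have hcl : IsClosed (LinearMap.range (A : H →ₗ[ℂ] H) : Set H) := by
    rw [h2]; simpa using isClosed_univ
  refine ⟨⟨⟨hcl, by rw [h1]; infer_instance⟩, ⟨hcl, hqf⟩⟩, ?_⟩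
  rw [indexZero, h1, hq]
  simp [rank_bot]

lemma specW_subset_spectrum (T : H →L[ℂ] H) : specW T ⊆ spectrum ℂ T := by
  intro lam h
  by_contra hs
  rw [specW, Set.mem_setOf_eq] at h
  exact h (fredholmZero_of_isUnit _ ((isUnit_opShift_iff T lam).mpr hs))

lemma specUW_subset_specW (T : H →L[ℂ] H) : specUW T ⊆ specW T := by
  intro lam h
  rw [specUW, Set.mem_setOf_eq] at h
  rw [specW, Set.mem_setOf_eq]
  rintro ⟨hf, hz⟩
  exact h ⟨hf.1, by rw [indexZero] at hz; exact le_of_eq hz⟩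

lemma not_spectrum_of_not_specA_not_specW (T : H →L[ℂ] H) (lam : ℂ)
    (hA : lam ∉ specA T) (hW : lam ∉ specW T) : lam ∉ spectrum ℂ T := by
  rw [← isUnit_opShift_iff]
  rw [specW, Set.mem_setOf_eq, not_not] at hW
  obtain ⟨hk, _⟩ := boundedBelow_data T lam hA
  have hz := hW.2
  rw [indexZero, hk] at hz
  simp only [rank_bot] at hz
  have hq : LinearMap.range (opShift T lam : H →ₗ[ℂ] H) = ⊤ := (quotient_rank_zero_iff _).mp hz.symm
  exact (isUnit_iff_bijective _).mpr ⟨hk, hq⟩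

lemma eigen_of_spectrum_not_specW (T : H →L[ℂ] H) (lam : ℂ)
    (hS : lam ∈ spectrum ℂ T) (hW : lam ∉ specW T) :
    (∃ x : H, x ≠ 0 ∧ T x = lam • x) ∧ FiniteDimensional ℂ (LinearMap.ker (opShift T lam : H →ₗ[ℂ] H)) := by
  rw [specW, Set.mem_setOf_eq, not_not] at hW
  have hk : LinearMap.ker (opShift T lam : H →ₗ[ℂ] H) ≠ ⊥ := by
    intro hkb
    have hz := hW.2
    rw [indexZero, hkb] at hz
    simp only [rank_bot] at hz
    have hq : LinearMap.range (opShift T lam : H →ₗ[ℂ] H) = ⊤ := (quotient_rank_zero_iff _).mp hz.symm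
    exact ((isUnit_opShift_iff T lam).mp ((isUnit_iff_bijective _).mpr ⟨hkb, hq⟩)) hS
  obtain ⟨x, hx, hx0⟩ := Submodule.exists_mem_ne_zero_of_ne_bot hk
  exact ⟨⟨x, hx0, (mem_eigen_iff T lam x).mpr hx⟩, hW.1.1.2⟩

end AuxLemmas
section KeyLemma

variable {H : Type*} [NormedAddCommGroup H] [InnerProductSpace ℂ H] [CompleteSpace H]

lemma exists_bound_on_orthogonal (A : H →L[ℂ] H)
    (hcl : IsClosed (LinearMap.range (A : H →ₗ[ℂ] H) : Set H))
    (hfd : FiniteDimensional ℂ (LinearMap.ker (A : H →ₗ[ℂ] H))) :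
    ∃ γ > 0, ∀ x ∈ (LinearMap.ker (A : H →ₗ[ℂ] H))ᗮ, γ * ‖x‖ ≤ ‖A x‖ := by
  haveI := hfd
  set K := LinearMap.ker (A : H →ₗ[ℂ] H) with hK
  set R := LinearMap.range (A : H →ₗ[ℂ] H) with hR
  haveI : CompleteSpace R := hcl.completeSpace_coe
  haveI : CompleteSpace (Kᗮ : Submodule ℂ H) := (Submodule.isClosed_orthogonal K).completeSpace_coe
  have hmem : ∀ v : (Kᗮ : Submodule ℂ H), (A.comp (Submodule.subtypeL Kᗮ)) v ∈ R :=
    fun v => LinearMap.mem_range_self _ _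
  let f : (Kᗮ : Submodule ℂ H) →L[ℂ] R := (A.comp (Submodule.subtypeL Kᗮ)).codRestrict R hmem
  have hker : LinearMap.ker (f : (Kᗮ : Submodule ℂ H) →ₗ[ℂ] R) = ⊥ := by
    refine le_antisymm ?_ bot_le
    rintro ⟨v, hv⟩ hfv
    have h0 : A v = 0 := by
      have : ((f ⟨v, hv⟩ : R) : H) = 0 := by
        rw [show f ⟨v, hv⟩ = 0 from hfv]; rfl
      simpa [f, ContinuousLinearMap.coe_codRestrict_apply] using this
    have hvK : v ∈ K := h0
    have : v = 0 := by
      have := Submodule.mem_orthogonal K v |>.mp hv v hvK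
      simpa [inner_self_eq_zero] using this
    simp [Submodule.mem_bot, Subtype.ext_iff, this]
  have hrange : LinearMap.range (f : (Kᗮ : Submodule ℂ H) →ₗ[ℂ] R) = ⊤ := by
    rw [eq_top_iff]
    rintro ⟨y, hy⟩ _
    obtain ⟨x, hx⟩ := hy
    have hxo : x - (Submodule.orthogonalProjectionOnto K x : H) ∈ Kᗮ := Submodule.sub_starProjection_mem_orthogonal x
    refine ⟨⟨x - (Submodule.orthogonalProjectionOnto K x : H), hxo⟩, ?_⟩
    apply Subtype.ext
    simp only [f, ContinuousLinearMap.coe_codRestrict_apply, ContinuousLinearMap.coe_comp',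
      Function.comp_apply, Submodule.coe_subtypeL', Submodule.coe_subtype, ContinuousLinearMap.coe_coe]
    have hker2 : A ((Submodule.orthogonalProjectionOnto K x : H)) = 0 := (Submodule.orthogonalProjectionOnto K x).2
    rw [map_sub, hker2, sub_zero]; exact hx
  let e := ContinuousLinearEquiv.ofBijective f hker hrange
  set M := ‖(e.symm : R →L[ℂ] (Kᗮ : Submodule ℂ H))‖ with hM
  refine ⟨(M + 1)⁻¹, by positivity, fun x hx => ?_⟩
  have h1 : ‖x‖ ≤ (M + 1) * ‖A x‖ := by
    have h2 : (e.symm (e ⟨x, hx⟩) : H) = x := by rw [e.symm_apply_apply]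
    have h3 : ‖e ⟨x, hx⟩‖ = ‖A x‖ := by
      show ‖(f ⟨x, hx⟩ : R)‖ = ‖A x‖
      rw [← Submodule.norm_coe]
      simp [f, ContinuousLinearMap.coe_codRestrict_apply]
    calc ‖x‖ = ‖(e.symm (e ⟨x, hx⟩) : H)‖ := by rw [h2]
    _ = ‖e.symm (e ⟨x, hx⟩)‖ := rfl
    _ ≤ M * ‖e ⟨x, hx⟩‖ := (e.symm : R →L[ℂ] (Kᗮ : Submodule ℂ H)).le_opNorm _
    _ = M * ‖A x‖ := by rw [h3]
    _ ≤ (M + 1) * ‖A x‖ := by have := norm_nonneg (A x); nlinarith [norm_nonneg (e.symm : R →L[ℂ] (Kᗮ : Submodule ℂ H))]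
  rw [inv_mul_le_iff₀ (by positivity)]
  exact h1

end KeyLemma
section KeyLemma2

variable {H : Type*} [NormedAddCommGroup H] [InnerProductSpace ℂ H] [CompleteSpace H]

lemma key_rank_le (T : H →L[ℂ] H) (lam : ℂ)
    (hiso : IsIsolatedIn (spectrum ℂ T) lam)
    (hcl : IsClosed (LinearMap.range (opShift T lam : H →ₗ[ℂ] H) : Set H))
    (hfd : FiniteDimensional ℂ (LinearMap.ker (opShift T lam : H →ₗ[ℂ] H))) :
    Module.rank ℂ (H ⧸ LinearMap.range (opShift T lam : H →ₗ[ℂ] H)) ≤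
      Module.rank ℂ (LinearMap.ker (opShift T lam : H →ₗ[ℂ] H)) := by
  haveI := hfd
  set A := opShift T lam with hA
  set K := LinearMap.ker (A : H →ₗ[ℂ] H) with hK
  set R := LinearMap.range (A : H →ₗ[ℂ] H) with hRdef
  obtain ⟨γ, hγ, hbd⟩ := exists_bound_on_orthogonal A hcl hfd
  obtain ⟨ε, hε, hball⟩ := hiso.2
  set m := min ε γ with hm
  have hm0 : 0 < m := lt_min hε hγ
  set μ : ℂ := ((m / 4 : ℝ) : ℂ) with hμ
  have hμn : ‖μ‖ = m / 4 := by
    rw [hμ, Complex.norm_real, Real.norm_eq_abs, abs_of_pos (by positivity)]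
  have hμpos : 0 < ‖μ‖ := by rw [hμn]; positivity
  have hμ0 : μ ≠ 0 := norm_pos_iff.mp hμpos
  have hμε : ‖μ‖ < ε := by
    rw [hμn]
    have : m ≤ ε := min_le_left _ _
    linarith
  have hμγ : 2 * ‖μ‖ < γ := by
    rw [hμn]
    have : m ≤ γ := min_le_right _ _
    linarith
  have hunit : IsUnit (opShift T (lam + μ)) := by
    rw [isUnit_opShift_iff]
    intro hmem
    have hin : lam + μ ∈ spectrum ℂ T ∩ Metric.ball lam ε :=
      ⟨hmem, by rw [Metric.mem_ball, dist_eq_norm]; simpa using hμε⟩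
    rw [hball] at hin
    exact hμ0 (add_eq_left.mp (Set.mem_singleton_iff.mp hin))
  obtain ⟨u, hu⟩ := hunit
  have hshift : ∀ x : H, opShift T (lam + μ) x = A x - μ • x := by
    intro x
    rw [opShift_apply, hA, opShift_apply, add_smul]
    abel
  haveI : CompleteSpace K := FiniteDimensional.complete ℂ K
  let Φ : (Rᗮ : Submodule ℂ H) →ₗ[ℂ] K :=
    ((Submodule.orthogonalProjectionOnto K).toLinearMap.comp
      ((↑u⁻¹ : H →L[ℂ] H) : H →ₗ[ℂ] H)).comp (Submodule.subtype Rᗮ)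
  have hinj : Function.Injective Φ := by
    rw [← LinearMap.ker_eq_bot, LinearMap.ker_eq_bot']
    rintro ⟨f, hf⟩ hΦ
    have hproj : Submodule.orthogonalProjectionOnto K ((↑u⁻¹ : H →L[ℂ] H) f) = 0 := hΦ
    set x := (↑u⁻¹ : H →L[ℂ] H) f with hx
    have hxK : x ∈ Kᗮ := Submodule.orthogonalProjectionOnto_eq_zero_iff.mp hproj
    have hAx : A x - μ • x = f := by
      have h5 := unit_inv_eq u f
      rw [hu, hshift] at h5
      exact h5
    suffices hf0 : f = 0 by exact Subtype.ext hf0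
    by_contra hf0
    have hfpos : 0 < ‖f‖ := norm_pos_iff.mpr hf0
    have hfR : ∀ y ∈ R, inner (𝕜 := ℂ) y f = 0 := (Submodule.mem_orthogonal R f).mp hf
    have h6 : inner (𝕜 := ℂ) (A x) f = 0 := hfR _ (LinearMap.mem_range_self _ _)
    have h72 : inner (𝕜 := ℂ) f f = -((starRingEnd ℂ) μ * inner (𝕜 := ℂ) x f) := by
      have h71 : inner (𝕜 := ℂ) f f = inner (𝕜 := ℂ) (A x - μ • x) f := by rw [hAx]
      rw [inner_sub_left, inner_smul_left, h6] at h71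
      rw [h71]; ring
    have hnorm : ‖(inner (𝕜 := ℂ) f f)‖ = ‖f‖^2 := by
      rw [inner_self_eq_norm_sq_to_K]
      simp [norm_pow, RCLike.norm_ofReal, sq_abs]
    have h8 : ‖f‖^2 = ‖μ‖ * ‖inner (𝕜 := ℂ) x f‖ := by
      rw [← hnorm, h72, norm_neg, norm_mul, RCLike.norm_conj]
    have h10 : ‖f‖^2 ≤ ‖μ‖ * (‖x‖ * ‖f‖) := by
      rw [h8]
      exact mul_le_mul_of_nonneg_left (norm_inner_le_norm x f) (norm_nonneg μ)
    have hfx : ‖f‖ ≤ ‖μ‖ * ‖x‖ := by nlinarith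
    have hxpos : 0 < ‖x‖ := by nlinarith
    have hb : γ * ‖x‖ ≤ ‖A x‖ := hbd x hxK
    have hAxup : ‖A x‖ ≤ ‖f‖ + ‖μ‖ * ‖x‖ := by
      have : A x = f + μ • x := by rw [← hAx]; abel
      rw [this]
      calc ‖f + μ • x‖ ≤ ‖f‖ + ‖μ • x‖ := norm_add_le _ _
      _ = ‖f‖ + ‖μ‖ * ‖x‖ := by rw [norm_smul]
    nlinarith
  haveI : CompleteSpace R := hcl.completeSpace_coe
  have hcompl : IsCompl R Rᗮ := Submodule.isCompl_orthogonal_of_hasOrthogonalProjection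
  calc Module.rank ℂ (H ⧸ R) = Module.rank ℂ Rᗮ :=
        (Submodule.quotientEquivOfIsCompl R Rᗮ hcompl).rank_eq
  _ ≤ Module.rank ℂ K := LinearMap.rank_le_of_injective Φ hinj

lemma not_specW_of_iso (T : H →L[ℂ] H) (lam : ℂ)
    (hiso : IsIsolatedIn (spectrum ℂ T) lam) (hU : lam ∉ specUW T) :
    lam ∉ specW T := by
  rw [specUW, Set.mem_setOf_eq, not_not] at hU
  obtain ⟨⟨hcl, hfd⟩, hnp⟩ := hU
  have hle := key_rank_le T lam hiso hcl hfd
  have hz : indexZero (opShift T lam) := le_antisymm hnp hle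
  haveI := hfd
  have hqf : FiniteDimensional ℂ (H ⧸ LinearMap.range (opShift T lam : H →ₗ[ℂ] H)) := by
    apply Module.rank_lt_aleph0_iff.mp
    exact lt_of_le_of_lt hle (Module.rank_lt_aleph0 ℂ _)
  rw [specW, Set.mem_setOf_eq, not_not]
  exact ⟨⟨⟨hcl, hfd⟩, ⟨hcl, hqf⟩⟩, hz⟩

end KeyLemma2
/-- `T` satisfies property `(UW_E)` iff `T` satisfies Weyl's theorem,
`σ_w(T) \ σ_uw(T) = σ(T) \ σ_a(T)` and `E(T) = E₀(T)`. -/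
theorem propUWE_iff_weyl_and
    {H : Type*} [NormedAddCommGroup H] [InnerProductSpace ℂ H] [CompleteSpace H]
    [TopologicalSpace.SeparableSpace H] (hinf : ¬ FiniteDimensional ℂ H)
    (T : H →L[ℂ] H) :
    PropUWE T ↔
      (WeylsTheorem T ∧ specW T \ specUW T = spectrum ℂ T \ specA T ∧ Eset T = E0set T) := by
  rw [PropUWE, WeylsTheorem]
  constructor
  · intro h
    have hEE : Eset T = E0set T := by
      ext lam
      constructor
      · intro hl
        have hl' : lam ∈ specA T \ specUW T := by rw [h]; exact hl
        have hU := hl'.2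
        rw [specUW, Set.mem_setOf_eq, not_not] at hU
        exact ⟨hl.1, hl.2, hU.1.2⟩
      · rintro ⟨h1, h2, _⟩
        exact ⟨h1, h2⟩
    refine ⟨?_, ?_, hEE⟩
    · ext lam
      constructor
      · rintro ⟨hS, hW⟩
        obtain ⟨hex, hfd⟩ := eigen_of_spectrum_not_specW T lam hS hW
        have hA : lam ∈ specA T := mem_specA_of_eigen T lam hex
        have hU : lam ∉ specUW T := fun hc => hW (specUW_subset_specW T hc)
        have hE : lam ∈ Eset T := by rw [← h]; exact ⟨hA, hU⟩
        exact ⟨hE.1, hE.2, hfd⟩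
      · intro hl
        have hE : lam ∈ Eset T := ⟨hl.1, hl.2.1⟩
        have hAU : lam ∈ specA T \ specUW T := by rw [h]; exact hE
        exact ⟨hl.1.1, not_specW_of_iso T lam hl.1 hAU.2⟩
    · ext lam
      constructor
      · rintro ⟨hW, hU⟩
        refine ⟨specW_subset_spectrum T hW, fun hA => ?_⟩
        have hE : lam ∈ Eset T := by rw [← h]; exact ⟨hA, hU⟩
        exact (not_specW_of_iso T lam hE.1 hU) hW
      · rintro ⟨hS, hA⟩
        refine ⟨?_, not_specUW_of_not_specA T lam hA⟩
        by_contra hWn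
        exact (not_spectrum_of_not_specA_not_specW T lam hA hWn) hS
  · rintro ⟨hW, hwu, hE⟩
    ext lam
    constructor
    · rintro ⟨hA, hU⟩
      by_cases hw : lam ∈ specW T
      · have hc : lam ∈ spectrum ℂ T \ specA T := by rw [← hwu]; exact ⟨hw, hU⟩
        exact absurd hA hc.2
      · have h0 : lam ∈ E0set T := by
          rw [← hW]; exact ⟨specA_subset_spectrum T hA, hw⟩
        rw [hE]; exact h0
    · intro hl
      have h0 : lam ∈ E0set T := by rw [← hE]; exact hl
      have hSW : lam ∈ spectrum ℂ T \ specW T := by rw [hW]; exact h0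
      exact ⟨mem_specA_of_eigen T lam h0.2.1,
        fun hU => hSW.2 (specUW_subset_specW T hU)⟩
end
end

section
/- Let T be the bounded operator on ℓ² defined by T(x₁,x₂,x₃,x₄,x₅,x₆,…) = (0, x₁, 0, x₃/3, 0, x₅/5, …), i.e. (Tx)_{2k} = x_{2k−1}/(2k−1) for k ≥ 1 and (Tx)_{2k−1} = 0. Then σ(T) = σ_a(T) = σ_uw(T) = σ_w(T) = E(T) = {0}, and consequently T does not satisfy property (UW_E). -/
noncomputable section

open Set MeasureTheory

/-- The Hilbert space `ℓ²`. -/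
abbrev l2 := lp (fun _ : ℕ => ℂ) 2

/-- coordinate evaluation as a linear map -/
def evalLM (n : ℕ) : l2 →ₗ[ℂ] ℂ where
  toFun x := x n
  map_add' x y := by simpa using congrFun (lp.coeFn_add x y) n
  map_smul' c x := by simpa using congrFun (lp.coeFn_smul c x) n

lemma evalLM_apply (n : ℕ) (x : l2) : evalLM n x = x n := rfl

lemma key (T : l2 →L[ℂ] l2)
    (hT : ∀ (x : l2) (n : ℕ), (T x) n = if Odd n then x (n - 1) / n else 0) :
    T * T = 0 := by
  refine ContinuousLinearMap.ext fun x => ?_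
  rw [ContinuousLinearMap.mul_apply, ContinuousLinearMap.zero_apply]
  refine lp.ext (funext fun n => ?_)
  rw [hT, lp.coeFn_zero, Pi.zero_apply]
  split_ifs with h
  · rw [hT]
    have : ¬ Odd (n - 1) := by
      obtain ⟨k, rfl⟩ := h
      simp [Nat.add_sub_cancel, Nat.even_iff, Nat.odd_iff] at *
    rw [if_neg this, zero_div]
  · rfl

lemma single_mem_ker (T : l2 →L[ℂ] l2)
    (hT : ∀ (x : l2) (n : ℕ), (T x) n = if Odd n then x (n - 1) / n else 0)
    (m : ℕ) (hm : Odd m) (c : ℂ) : T (lp.single 2 m c) = 0 := by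
  refine lp.ext (funext fun n => ?_)
  rw [hT, lp.coeFn_zero, Pi.zero_apply]
  split_ifs with h
  · have hne : n - 1 ≠ m := by
      obtain ⟨k, rfl⟩ := h
      rcases hm with ⟨j, hj⟩
      omega
    rw [lp.single_apply_ne (E := fun _ : ℕ => ℂ) 2 m c hne, zero_div]
  · rfl

lemma lin_indep_singles :
    LinearIndependent ℂ (fun k : ℕ => lp.single 2 (2 * k + 1) (1 : ℂ) : ℕ → l2) := by
  rw [linearIndependent_iff']
  intro s g hsum i hi
  have h1 : (evalLM (2 * i + 1)) (∑ j ∈ s, g j • lp.single 2 (2 * j + 1) (1 : ℂ)) = 0 := by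
    rw [hsum]; simp [evalLM]
  rw [map_sum, Finset.sum_eq_single i] at h1
  · simpa [evalLM_apply, lp.single_apply_self] using h1
  · intro j hj hji
    have hne : (2 * i + 1) ≠ (2 * j + 1) := by omega
    simp [evalLM_apply, lp.single_apply_ne (E := fun _ : ℕ => ℂ) 2 (2 * j + 1) (1 : ℂ) hne, Pi.single_apply, hne, hji.symm]
  · intro h; exact absurd hi h

set_option maxHeartbeats 1000000 in
/-- the operator `T(x₁,x₂,x₃,x₄,x₅,…) = (0, x₁, 0, x₃/3, 0, x₅/5, …)`
(with 0-indexed coordinates: `(Tx)ₙ = x_{n-1}/n` for odd `n`, `0` for even `n`)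
has `σ(T) = σ_a(T) = σ_uw(T) = σ_w(T) = E(T) = {0}`, and consequently `T`
does not satisfy property `(UW_E)`. -/
theorem stmt12_weighted_shift_example
    (T : l2 →L[ℂ] l2)
    (hT : ∀ (x : l2) (n : ℕ), (T x) n = if Odd n then x (n - 1) / n else 0) :
    spectrum ℂ T = {0} ∧
    specA T = {0} ∧
    specUW T = {0} ∧
    specW T = {0} ∧
    Eset T = {0} ∧
    ¬ PropUWE T := by
  have hT2 : T * T = 0 := key T hT
  set e : l2 := lp.single 2 1 (1 : ℂ) with he_def
  have he0 : T e = 0 := single_mem_ker T hT 1 ⟨0, by ring⟩ 1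
  have hene : e ≠ 0 := by
    intro h
    have h1 : (e : ∀ _ : ℕ, ℂ) 1 = 1 := lp.single_apply_self (E := fun _ : ℕ => ℂ) 2 1 (1 : ℂ)
    rw [h, lp.coeFn_zero, Pi.zero_apply] at h1
    exact one_ne_zero h1.symm
  have hop : ∀ lam : ℂ, opShift T lam = T - lam • 1 := fun lam => rfl
  have h0op : opShift T 0 = T := by
    rw [hop]; simp
  -- the inverse for lam ≠ 0
  have hunit : ∀ lam : ℂ, lam ≠ 0 → ∃ S : l2 →L[ℂ] l2,
      (T - lam • 1) * S = 1 ∧ S * (T - lam • 1) = 1 := by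
    intro lam hlam
    refine ⟨(-(lam⁻¹)) • 1 + (-(lam⁻¹ * lam⁻¹)) • T, ?_, ?_⟩ <;>
    · simp only [mul_add, add_mul, sub_mul, mul_sub, smul_mul_assoc, mul_smul_comm, one_mul,
        mul_one, hT2, smul_zero, smul_smul]
      match_scalars <;> field_simp <;> ring
  -- consequences for lam ≠ 0
  have main : ∀ lam : ℂ, lam ≠ 0 →
      (∃ c > 0, ∀ x : l2, c * ‖x‖ ≤ ‖T x - lam • x‖) ∧
      LinearMap.ker (opShift T lam : l2 →ₗ[ℂ] l2) = ⊥ ∧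
      LinearMap.range (opShift T lam : l2 →ₗ[ℂ] l2) = ⊤ := by
    intro lam hlam
    obtain ⟨S, hAS, hSA⟩ := hunit lam hlam
    have hAx : ∀ x : l2, (opShift T lam) x = T x - lam • x := by
      intro x; rw [hop]; simp
    have hxid : ∀ x : l2, S ((opShift T lam) x) = x := by
      intro x
      have h := congrArg (fun f : l2 →L[ℂ] l2 => f x) hSA
      simpa [ContinuousLinearMap.mul_apply, hop] using h
    have hyid : ∀ y : l2, (opShift T lam) (S y) = y := by
      intro y
      have h := congrArg (fun f : l2 →L[ℂ] l2 => f y) hAS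
      simpa [ContinuousLinearMap.mul_apply, hop] using h
    have hSne : S ≠ 0 := by
      intro hS0
      have h := hxid e
      rw [hS0] at h
      simp only [ContinuousLinearMap.zero_apply] at h
      exact hene h.symm
    have hSpos : 0 < ‖S‖ := norm_pos_iff.mpr hSne
    refine ⟨⟨‖S‖⁻¹, inv_pos.mpr hSpos, fun x => ?_⟩, ?_, ?_⟩
    · rw [inv_mul_le_iff₀ hSpos, ← hAx x]
      calc ‖x‖ = ‖S ((opShift T lam) x)‖ := by rw [hxid]
        _ ≤ ‖S‖ * ‖(opShift T lam) x‖ := S.le_opNorm _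
    · exact LinearMap.ker_eq_bot'.mpr fun m hm => by
        have := hxid m
        rw [show (opShift T lam) m = 0 from hm] at this
        simpa using this.symm
    · exact LinearMap.range_eq_top.mpr fun y => ⟨S y, hyid y⟩
  -- spectrum
  have hspec : spectrum ℂ T = {0} := by
    ext lam
    simp only [Set.mem_singleton_iff]
    constructor
    · intro hmem
      by_contra hlam
      obtain ⟨S, hAS, hSA⟩ := hunit lam hlam
      have hu : IsUnit (T - lam • 1) := ⟨⟨T - lam • 1, S, hAS, hSA⟩, rfl⟩
      have : IsUnit ((algebraMap ℂ (l2 →L[ℂ] l2)) lam - T) := by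
        rw [Algebra.algebraMap_eq_smul_one, ← neg_sub T (lam • (1 : l2 →L[ℂ] l2))]
        exact hu.neg
      exact (spectrum.notMem_iff.mpr this) hmem
    · rintro rfl
      by_contra h0
      have hu : IsUnit (-T) := by
        have := spectrum.notMem_iff.mp h0
        rwa [map_zero, zero_sub] at this
      obtain ⟨u, hu⟩ := hu
      have h1 : (↑u⁻¹ * ↑u : l2 →L[ℂ] l2) = 1 := u.inv_mul
      have h2 := congrArg (fun f : l2 →L[ℂ] l2 => f e) h1
      rw [hu] at h2
      simp only [ContinuousLinearMap.mul_apply, ContinuousLinearMap.neg_apply, he0,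
        neg_zero, map_zero, ContinuousLinearMap.one_apply] at h2
      exact hene h2.symm
  -- specA
  have hspecA : specA T = {0} := by
    ext lam
    simp only [specA, Set.mem_setOf_eq, Set.mem_singleton_iff]
    constructor
    · intro hmem
      by_contra hlam
      exact hmem (main lam hlam).1
    · rintro rfl
      rintro ⟨c, hc, hb⟩
      have := hb e
      rw [he0] at this
      simp only [zero_smul, sub_zero, norm_zero] at this
      have hepos : 0 < ‖e‖ := norm_pos_iff.mpr hene
      nlinarith
  -- ker T not finite dimensional
  have hkerT : ¬ FiniteDimensional ℂ (LinearMap.ker (T : l2 →ₗ[ℂ] l2)) := by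
    intro hfd
    set v : ℕ → LinearMap.ker (T : l2 →ₗ[ℂ] l2) := fun k =>
      ⟨lp.single 2 (2 * k + 1) (1 : ℂ),
        LinearMap.mem_ker.mpr (single_mem_ker T hT (2 * k + 1) ⟨k, by ring⟩ 1)⟩ with hv
    have hli : LinearIndependent ℂ v := by
      apply LinearIndependent.of_comp (LinearMap.ker (T : l2 →ₗ[ℂ] l2)).subtype
      have : ((LinearMap.ker (T : l2 →ₗ[ℂ] l2)).subtype ∘ v)
          = (fun k : ℕ => lp.single 2 (2 * k + 1) (1 : ℂ)) := rfl
      rw [this]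
      exact lin_indep_singles
    exact Module.Finite.not_linearIndependent_of_infinite v hli
  -- USF facts at lam ≠ 0
  have husf : ∀ lam : ℂ, lam ≠ 0 →
      IsUSF (opShift T lam) ∧ IsFredholmOp (opShift T lam) ∧
      indexNonpos (opShift T lam) ∧ indexZero (opShift T lam) := by
    intro lam hlam
    obtain ⟨_, hker, hrange⟩ := main lam hlam
    haveI hq : Subsingleton (l2 ⧸ LinearMap.range (opShift T lam : l2 →ₗ[ℂ] l2)) :=
      Submodule.Quotient.subsingleton_iff.mpr hrange
    have hclosed : IsClosed (LinearMap.range (opShift T lam : l2 →ₗ[ℂ] l2) : Set l2) := by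
      rw [hrange]; exact isClosed_univ
    have hfker : FiniteDimensional ℂ (LinearMap.ker (opShift T lam : l2 →ₗ[ℂ] l2)) := by
      rw [hker]; infer_instance
    have hfq : FiniteDimensional ℂ (l2 ⧸ LinearMap.range (opShift T lam : l2 →ₗ[ℂ] l2)) :=
      Module.finite_of_rank_eq_zero (rank_subsingleton' ℂ _)
    have hrk : Module.rank ℂ (LinearMap.ker (opShift T lam : l2 →ₗ[ℂ] l2)) = 0 := by
      rw [hker]; exact rank_subsingleton' ℂ _
    have hrq : Module.rank ℂ (l2 ⧸ LinearMap.range (opShift T lam : l2 →ₗ[ℂ] l2)) = 0 :=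
      rank_subsingleton' ℂ _
    exact ⟨⟨hclosed, hfker⟩, ⟨⟨hclosed, hfker⟩, hclosed, hfq⟩,
      by rw [indexNonpos, hrk]; exact zero_le, by rw [indexZero, hrk, hrq]⟩
  -- specUW
  have hspecUW : specUW T = {0} := by
    ext lam
    simp only [specUW, Set.mem_setOf_eq, Set.mem_singleton_iff]
    constructor
    · intro hmem
      by_contra hlam
      obtain ⟨h1, _, h2, _⟩ := husf lam hlam
      exact hmem ⟨h1, h2⟩
    · rintro rfl
      rintro ⟨⟨_, hfd⟩, _⟩
      rw [h0op] at hfd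
      exact hkerT hfd
  -- specW
  have hspecW : specW T = {0} := by
    ext lam
    simp only [specW, Set.mem_setOf_eq, Set.mem_singleton_iff]
    constructor
    · intro hmem
      by_contra hlam
      obtain ⟨_, h1, _, h2⟩ := husf lam hlam
      exact hmem ⟨h1, h2⟩
    · rintro rfl
      rintro ⟨⟨⟨_, hfd⟩, _⟩, _⟩
      rw [h0op] at hfd
      exact hkerT hfd
  -- Eset
  have hE : Eset T = {0} := by
    ext lam
    simp only [Eset, IsIsolatedIn, Set.mem_setOf_eq, Set.mem_singleton_iff]
    constructor
    · rintro ⟨⟨hmem, _⟩, _⟩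
      rw [hspec] at hmem
      exact hmem
    · rintro rfl
      refine ⟨⟨by rw [hspec]; rfl, 1, one_pos, ?_⟩, e, hene, by rw [he0, zero_smul]⟩
      rw [hspec]
      exact Set.inter_eq_self_of_subset_left
        (Set.singleton_subset_iff.mpr (Metric.mem_ball_self one_pos))
  refine ⟨hspec, hspecA, hspecUW, hspecW, hE, ?_⟩
  rw [PropUWE, hspecA, hspecUW, hE, Set.diff_self]
  exact fun h => (Set.singleton_ne_empty (0 : ℂ)) h.symm
end
end

section
/- Let T be the bounded operator on ℓ² defined by T(x₁,x₂,x₃,…) = (0, x₁, 0, x₂, 0, x₃, …), i.e. (Tx)_{2k} = x_k and (Tx)_{2k−1} = 0 for k ≥ 1. Then σ(T) = {λ ∈ ℂ : |λ| ≤ 1}, σ_a(T) = σ_uw(T) = {λ ∈ ℂ : |λ| = 1}, and E(T) = ∅; consequently T satisfies property (UW_E). -/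
noncomputable section

open Set MeasureTheory

namespace Stmt13Aux

open ENNReal

def e2 (j : ℕ) : ℕ := 2 ^ j - 1

lemma e2_succ (j : ℕ) : e2 (j + 1) = 2 * e2 j + 1 := by
  have h1 : 1 ≤ 2 ^ j := Nat.one_le_two_pow
  have h2 : 2 ^ (j + 1) = 2 * 2 ^ j := by rw [pow_succ]; ring
  simp only [e2]; omega

lemma e2_inj : Function.Injective e2 := by
  intro i j h
  have hi : 1 ≤ 2 ^ i := Nat.one_le_two_pow
  have hj : 1 ≤ 2 ^ j := Nat.one_le_two_pow
  have : (2:ℕ) ^ i = 2 ^ j := by simp only [e2] at h; omega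
  exact Nat.pow_right_injective le_rfl this

lemma e2_odd {j : ℕ} (hj : 1 ≤ j) : Odd (e2 j) := by
  have h := e2_succ (j - 1)
  have hj' : j - 1 + 1 = j := by omega
  rw [hj'] at h
  rw [Nat.odd_iff]; omega

lemma norm_sq (f : l2) : ‖f‖ ^ (2:ℝ) = ∑' n, ‖f n‖ ^ (2:ℝ) := by
  have h := lp.norm_rpow_eq_tsum (p := 2) (by norm_num) f
  simpa using h

lemma summ (f : l2) : Summable fun n => ‖f n‖ ^ (2:ℝ) := by
  have h := lp.memℓp f
  rw [memℓp_gen_iff (by norm_num)] at h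
  simpa using h

variable (T : l2 →L[ℂ] l2)
  (hT : ∀ (x : l2) (n : ℕ), (T x) n = if Odd n then x ((n - 1) / 2) else 0)

include hT

lemma normT (x : l2) : ‖T x‖ = ‖x‖ := by
  have h2 : (0:ℝ) < (2 : ℝ≥0∞).toReal := by norm_num
  rw [lp.norm_eq_tsum_rpow h2, lp.norm_eq_tsum_rpow h2 x]
  congr 1
  have hinj : Function.Injective (fun k : ℕ => 2 * k + 1) := by
    intro a b h; dsimp only at h; omega
  rw [← Function.Injective.tsum_eq hinj
    (f := fun n => ‖(T x) n‖ ^ (2 : ℝ≥0∞).toReal) ?_]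
  · apply tsum_congr; intro k
    have hv : (T x) (2 * k + 1) = x k := by
      rw [hT, if_pos ⟨k, by ring⟩]
      have hk : (2 * k + 1 - 1) / 2 = k := by omega
      rw [hk]
    rw [hv]
  · intro n hn
    simp only [Function.mem_support, ne_eq] at hn
    rcases Nat.even_or_odd n with he | ho
    · exfalso; apply hn
      rw [hT, if_neg (by simpa using he)]
      simp [Real.zero_rpow (by norm_num : (2 : ℝ≥0∞).toReal ≠ 0)]
    · obtain ⟨m, hm⟩ := ho
      exact ⟨m, by dsimp only; omega⟩

lemma eig_zero (lam : ℂ) (x : l2) (hx : T x = lam • x) : x = 0 := by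
  have hc : ∀ n, (T x) n = lam * x n := by
    intro n
    rw [hx, lp.coeFn_smul, Pi.smul_apply, smul_eq_mul]
  have key : ∀ n, x n = 0 := by
    by_cases hlam : lam = 0
    · intro k
      have h := hc (2 * k + 1)
      rw [hT, if_pos ⟨k, by ring⟩, hlam, zero_mul] at h
      have hk : (2 * k + 1 - 1) / 2 = k := by omega
      rwa [hk] at h
    · intro n
      induction n using Nat.strong_induction_on with
      | _ n ih =>
        rcases Nat.even_or_odd n with he | ho
        · have h := hc n
          rw [hT, if_neg (by simpa using he)] at h
          exact (mul_eq_zero.1 h.symm).resolve_left hlam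
        · obtain ⟨m, hm⟩ := ho
          have h := hc n
          rw [hT, if_pos ⟨m, by omega⟩] at h
          have hk : (n - 1) / 2 = m := by omega
          rw [hk, ih m (by omega)] at h
          exact (mul_eq_zero.1 h.symm).resolve_left hlam
  apply lp.ext
  funext n
  simp only [lp.coeFn_zero, Pi.zero_apply, key n]

lemma bdd_below {lam : ℂ} (h : ‖lam‖ ≠ 1) :
    ∃ c > 0, ∀ x : l2, c * ‖x‖ ≤ ‖T x - lam • x‖ := by
  refine ⟨|1 - ‖lam‖|, abs_pos.2 (sub_ne_zero.2 fun hh => h hh.symm), fun x => ?_⟩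
  have h1 : |‖T x‖ - ‖lam • x‖| ≤ ‖T x - lam • x‖ := abs_norm_sub_norm_le _ _
  rw [normT T hT, norm_smul] at h1
  calc |1 - ‖lam‖| * ‖x‖ = |(1 - ‖lam‖) * ‖x‖| := by
        rw [abs_mul, abs_of_nonneg (norm_nonneg x)]
    _ = |‖x‖ - ‖lam‖ * ‖x‖| := by rw [sub_mul, one_mul]
    _ ≤ ‖T x - lam • x‖ := h1

lemma spec_mem {lam : ℂ} (h : ‖lam‖ ≤ 1) : lam ∈ spectrum ℂ T := by
  rw [spectrum.mem_iff]
  intro hu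
  set A : l2 →L[ℂ] l2 := algebraMap ℂ (l2 →L[ℂ] l2) lam - T with hA
  obtain ⟨u, hu'⟩ := hu
  set x : l2 := (↑u⁻¹ : l2 →L[ℂ] l2) (lp.single 2 0 1) with hxdef
  have hx : A x = lp.single 2 0 1 := by
    rw [← hu', hxdef, ← ContinuousLinearMap.mul_apply, ← Units.val_mul]
    simp
  have hcoord : ∀ n, lam * x n - (T x) n = (lp.single 2 0 1 : l2) n := by
    intro n
    have h1 : A x = lam • x - T x := by
      rw [hA, ContinuousLinearMap.sub_apply, Algebra.algebraMap_eq_smul_one,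
        ContinuousLinearMap.smul_apply, ContinuousLinearMap.one_apply]
    have heq : lam • x - T x = lp.single 2 0 1 := by rw [← h1]; exact hx
    rw [← heq, lp.coeFn_sub, Pi.sub_apply, lp.coeFn_smul, Pi.smul_apply, smul_eq_mul]
  have hpow : ∀ j, x (e2 j) * lam ^ (j + 1) = 1 := by
    intro j
    induction j with
    | zero =>
      have h0 := hcoord 0
      rw [hT, if_neg (by simp), lp.single_apply_self] at h0
      simpa [e2] using by linear_combination h0
    | succ j ih =>
      have hn := hcoord (e2 (j + 1))
      have hodd : Odd (e2 (j + 1)) := by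
        rw [Nat.odd_iff]; have := e2_succ j; omega
      rw [hT, if_pos hodd] at hn
      have hk : (e2 (j + 1) - 1) / 2 = e2 j := by have := e2_succ j; omega
      have hne : e2 (j + 1) ≠ 0 := by have := e2_succ j; omega
      rw [hk, lp.single_apply_ne _ _ _ hne] at hn
      calc x (e2 (j + 1)) * lam ^ (j + 1 + 1)
          = (lam * x (e2 (j + 1))) * lam ^ (j + 1) := by ring
        _ = x (e2 j) * lam ^ (j + 1) := by rw [sub_eq_zero.1 hn]
        _ = 1 := ih
  have hbig : ∀ j : ℕ, (1:ℝ) ≤ ‖x (e2 j)‖ ^ (2:ℝ) := by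
    intro j
    have h1 : ‖x (e2 j)‖ * ‖lam‖ ^ (j + 1) = 1 := by
      have := congrArg norm (hpow j)
      simpa [norm_mul, norm_pow] using this
    have h2 : ‖lam‖ ^ (j + 1) ≤ 1 := pow_le_one₀ (norm_nonneg _) h
    have h3 : (1:ℝ) ≤ ‖x (e2 j)‖ := by nlinarith [norm_nonneg (x (e2 j))]
    exact Real.one_le_rpow h3 (by norm_num)
  have hs : Summable fun j => ‖x (e2 j)‖ ^ (2:ℝ) := (summ x).comp_injective e2_inj
  have htend := hs.tendsto_atTop_zero
  have hev := htend.eventually (gt_mem_nhds (by norm_num : (0:ℝ) < 1))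
  obtain ⟨j, hj⟩ := hev.exists
  exact absurd (hbig j) (not_le.2 hj)

lemma approx {lam : ℂ} (hl : ‖lam‖ = 1) {c : ℝ} (hc : 0 < c) :
    ∃ x : l2, ‖T x - lam • x‖ < c * ‖x‖ := by
  obtain ⟨M, hM⟩ := exists_nat_gt (2 / c ^ 2)
  have hM2 : 2 < c ^ 2 * (M + 1) := by
    have hc2 : 0 < c ^ 2 := by positivity
    rw [div_lt_iff₀ hc2] at hM
    nlinarith
  set μ := (starRingEnd ℂ) lam with hμdef
  have hμ : lam * μ = 1 := by
    rw [hμdef, Complex.mul_conj]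
    norm_cast
    rw [← Complex.sq_norm, hl]; norm_num
  have hμnorm : ∀ j : ℕ, ‖μ ^ j‖ = 1 := by
    intro j; rw [norm_pow, hμdef, RCLike.norm_conj, hl, one_pow]
  set x : l2 := ∑ j ∈ Finset.range (M + 1), lp.single 2 (e2 j) (μ ^ j) with hxdef
  have hxc : ∀ n, x n = ∑ j ∈ Finset.range (M + 1), (lp.single 2 (e2 j) (μ ^ j) : l2) n := by
    intro n; rw [hxdef, lp.coeFn_sum, Finset.sum_apply]
  have hxval : ∀ j, j ≤ M → x (e2 j) = μ ^ j := by
    intro j hj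
    rw [hxc, Finset.sum_eq_single_of_mem j (Finset.mem_range.2 (by omega))]
    · exact lp.single_apply_self _ _ _
    · intro i _ hij
      exact lp.single_apply_ne _ _ _ (fun hh => hij (e2_inj hh).symm)
  have hx0 : ∀ n, (∀ j, j ≤ M → n ≠ e2 j) → x n = 0 := by
    intro n hn
    rw [hxc]
    apply Finset.sum_eq_zero
    intro i hi
    exact lp.single_apply_ne _ _ _ (hn i (Nat.lt_succ_iff.mp (Finset.mem_range.1 hi)))
  set y : l2 := T x - lam • x with hydef
  have hyc : ∀ n, y n = (T x) n - lam * x n := by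
    intro n
    rw [hydef, lp.coeFn_sub, Pi.sub_apply, lp.coeFn_smul, Pi.smul_apply, smul_eq_mul]
  have hy0 : y 0 = -lam := by
    have hx00 : x 0 = 1 := by
      have := hxval 0 (by omega)
      simpa [e2] using this
    rw [hyc, hT, if_neg (by simp), hx00]
    ring
  have hytop : y (e2 (M + 1)) = μ ^ M := by
    have hodd : Odd (e2 (M + 1)) := e2_odd (by omega)
    rw [hyc, hT, if_pos hodd]
    have h1 : (e2 (M + 1) - 1) / 2 = e2 M := by have := e2_succ M; omega
    have h2 : x (e2 (M + 1)) = 0 := by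
      apply hx0
      intro j hj hh
      exact absurd (e2_inj hh) (by omega)
    rw [h1, hxval M le_rfl, h2]
    ring
  have hyvanish : ∀ n, n ≠ 0 → n ≠ e2 (M + 1) → y n = 0 := by
    intro n hn0 hnM
    rcases Nat.even_or_odd n with he | ho
    · have hTn : (T x) n = 0 := by rw [hT, if_neg (by simpa using he)]
      have hxn : x n = 0 := by
        apply hx0
        intro j hj hEq
        rcases Nat.eq_zero_or_pos j with hj0 | hj1
        · subst hj0; exact hn0 (by simpa [e2] using hEq)
        · have hodd := e2_odd hj1
          rw [← hEq] at hodd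
          exact (Nat.not_odd_iff_even.2 he) hodd
      rw [hyc, hTn, hxn]; ring
    · obtain ⟨k, hk⟩ := ho
      have hTn : (T x) n = x k := by
        rw [hT, if_pos ⟨k, by omega⟩]
        have hdiv : (n - 1) / 2 = k := by omega
        rw [hdiv]
      by_cases hcase : ∃ j, j ≤ M ∧ k = e2 j
      · obtain ⟨j, hj, hkj⟩ := hcase
        have hnj : n = e2 (j + 1) := by rw [e2_succ]; omega
        have hjM : j ≠ M := fun hh => hnM (by rw [hnj, hh])
        rw [hyc, hTn, hkj, hxval j hj, hnj, hxval (j + 1) (by omega), pow_succ]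
        linear_combination (-(μ ^ j)) * hμ
      · push_neg at hcase
        have hxk : x k = 0 := hx0 k hcase
        have hxn : x n = 0 := by
          apply hx0
          intro j hj hEq
          have hj1 : 1 ≤ j := by
            rcases Nat.eq_zero_or_pos j with hj0 | hj1
            · exact absurd (by simpa [e2, hj0] using hEq) hn0
            · exact hj1
          have hsucc := e2_succ (j - 1)
          rw [(by omega : j - 1 + 1 = j)] at hsucc
          exact hcase (j - 1) (by omega) (by omega)
        rw [hyc, hTn, hxk, hxn]; ring
  have hxnorm : (M + 1 : ℝ) ≤ ‖x‖ ^ (2:ℝ) := by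
    rw [norm_sq]
    have himg : ∀ n ∈ (Finset.range (M + 1)).image e2, ‖x n‖ ^ (2:ℝ) = 1 := by
      intro n hn
      obtain ⟨j, hj, rfl⟩ := Finset.mem_image.1 hn
      rw [hxval j (Nat.lt_succ_iff.mp (Finset.mem_range.1 hj)), hμnorm, Real.one_rpow]
    calc (M + 1 : ℝ) = ∑ n ∈ (Finset.range (M + 1)).image e2, ‖x n‖ ^ (2:ℝ) := by
          rw [Finset.sum_congr rfl himg]
          rw [Finset.sum_const, Finset.card_image_of_injective _ e2_inj, Finset.card_range]
          simp
      _ ≤ ∑' n, ‖x n‖ ^ (2:ℝ) :=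
          Summable.sum_le_tsum _ (fun n _ => Real.rpow_nonneg (norm_nonneg _) _) (summ x)
  have hynorm : ‖y‖ ^ (2:ℝ) ≤ 2 := by
    rw [norm_sq]
    have hne : (0:ℕ) ≠ e2 (M + 1) := by
      have := e2_succ M; omega
    rw [tsum_eq_sum (s := {0, e2 (M + 1)}) ?_]
    · rw [Finset.sum_pair hne, hy0, hytop]
      rw [norm_neg]
      have h1 : ‖lam‖ ^ (2:ℝ) = 1 := by rw [hl, Real.one_rpow]
      have h2 : ‖μ ^ M‖ ^ (2:ℝ) = 1 := by rw [hμnorm, Real.one_rpow]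
      rw [h1, h2]; norm_num
    · intro n hn
      simp only [Finset.mem_insert, Finset.mem_singleton, not_or] at hn
      rw [hyvanish n hn.1 hn.2, norm_zero, Real.zero_rpow (by norm_num)]
  refine ⟨x, ?_⟩
  have hcx : 0 ≤ c * ‖x‖ := by positivity
  have hfin : ‖y‖ ^ (2:ℝ) < (c * ‖x‖) ^ (2:ℝ) := by
    have hrw : (c * ‖x‖) ^ (2:ℝ) = c ^ (2:ℝ) * ‖x‖ ^ (2:ℝ) :=
      Real.mul_rpow (le_of_lt hc) (norm_nonneg _)
    have hc2 : c ^ (2:ℝ) = c ^ 2 := by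
      rw [show ((2:ℝ) = ((2:ℕ):ℝ)) by norm_num, Real.rpow_natCast]
    have hmono : c ^ 2 * (M + 1 : ℝ) ≤ c ^ 2 * ‖x‖ ^ (2:ℝ) :=
      mul_le_mul_of_nonneg_left hxnorm (by positivity)
    rw [hrw, hc2]
    linarith
  have h2r : ∀ a : ℝ, 0 ≤ a → a ^ (2:ℝ) = a ^ 2 := by
    intro a _
    rw [show ((2:ℝ) = ((2:ℕ):ℝ)) by norm_num, Real.rpow_natCast]
  rw [h2r _ (norm_nonneg y), h2r _ hcx] at hfin
  calc ‖T x - lam • x‖ = ‖y‖ := by rw [hydef]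
    _ < c * ‖x‖ := lt_of_pow_lt_pow_left₀ 2 hcx hfin

omit hT in
lemma opShift_apply (lam : ℂ) (x : l2) : opShift T lam x = T x - lam • x := rfl

lemma ker_bot (lam : ℂ) : LinearMap.ker (opShift T lam : l2 →ₗ[ℂ] l2) = ⊥ := by
  rw [Submodule.eq_bot_iff]
  intro x hx
  rw [LinearMap.mem_ker] at hx
  have : T x - lam • x = 0 := hx
  exact eig_zero T hT lam x (sub_eq_zero.1 this)

lemma usf_of_ne {lam : ℂ} (h : ‖lam‖ ≠ 1) :
    IsUSF (opShift T lam) ∧ indexNonpos (opShift T lam) := by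
  obtain ⟨c, hc, hb⟩ := bdd_below T hT h
  have hb' : ∀ x : l2, ‖x‖ ≤ ((⟨c, le_of_lt hc⟩ : NNReal)⁻¹ : NNReal) * ‖opShift T lam x‖ := by
    intro x
    have h1 := hb x
    have h2 : ((((⟨c, le_of_lt hc⟩ : NNReal)⁻¹ : NNReal)) : ℝ) = c⁻¹ := NNReal.coe_inv _
    rw [h2, opShift_apply]
    calc ‖x‖ = c⁻¹ * (c * ‖x‖) := by field_simp
      _ ≤ c⁻¹ * ‖T x - lam • x‖ := mul_le_mul_of_nonneg_left h1 (by positivity)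
  have hanti := ContinuousLinearMap.antilipschitz_of_bound (opShift T lam) hb'
  have hrange := ContinuousLinearMap.closed_range_of_antilipschitz hanti
  refine ⟨⟨?_, ?_⟩, ?_⟩
  · rw [← hrange]
    exact Submodule.isClosed_topologicalClosure _
  · rw [ker_bot T hT]
    infer_instance
  · unfold indexNonpos
    rw [ker_bot T hT, rank_bot ℂ l2]
    exact zero_le

set_option maxHeartbeats 1000000 in
lemma not_usf {lam : ℂ} (hl : ‖lam‖ = 1) :
    ¬ (IsUSF (opShift T lam) ∧ indexNonpos (opShift T lam)) := by
  rintro ⟨⟨hcl, -⟩, -⟩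
  set S := opShift T lam with hS
  haveI : CompleteSpace (LinearMap.range (S : l2 →ₗ[ℂ] l2)) := hcl.completeSpace_coe
  set S' : l2 →L[ℂ] (LinearMap.range (S : l2 →ₗ[ℂ] l2)) :=
    S.codRestrict _ (fun z => LinearMap.mem_range_self _ z) with hS'
  have hker' : LinearMap.ker (S' : l2 →ₗ[ℂ] LinearMap.range (S : l2 →ₗ[ℂ] l2)) = ⊥ := by
    rw [hS', ContinuousLinearMap.ker_codRestrict]
    exact ker_bot T hT lam
  have hrange' : LinearMap.range (S' : l2 →ₗ[ℂ] LinearMap.range (S : l2 →ₗ[ℂ] l2)) = ⊤ := by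
    rw [LinearMap.range_eq_top]
    rintro ⟨z, w, hw⟩
    exact ⟨w, Subtype.ext (by simpa [hS'] using hw)⟩
  set e := ContinuousLinearEquiv.ofBijective S' hker' hrange' with he
  set K : ℝ := ‖(e.symm : (LinearMap.range (S : l2 →ₗ[ℂ] l2)) →L[ℂ] l2)‖ with hK
  have hKnonneg : 0 ≤ K := norm_nonneg _
  have hlb : ∀ z : l2, ‖z‖ ≤ (K + 1) * ‖T z - lam • z‖ := by
    intro z
    have h1 := e.antilipschitz.le_mul_dist z 0
    rw [map_zero, dist_zero_right, dist_zero_right] at h1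
    have h2 : ‖e z‖ = ‖T z - lam • z‖ := by
      have h4 : e z = S' z :=
        congrFun (ContinuousLinearEquiv.coeFn_ofBijective S' hker' hrange') z
      rw [Submodule.coe_norm, h4, hS', ContinuousLinearMap.coe_codRestrict_apply, hS,
        opShift_apply]
    calc ‖z‖ ≤ K * ‖e z‖ := h1
      _ ≤ (K + 1) * ‖e z‖ :=
        mul_le_mul_of_nonneg_right (by linarith) (norm_nonneg _)
      _ = (K + 1) * ‖T z - lam • z‖ := by rw [h2]
  have hcpos : 0 < (K + 1)⁻¹ := by positivity
  obtain ⟨x, hx⟩ := approx T hT hl hcpos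
  have h5 := hlb x
  have h6 : (K + 1) * ((K + 1)⁻¹ * ‖x‖) = ‖x‖ := by field_simp
  have h7 := mul_lt_mul_of_pos_left hx (show (0:ℝ) < K + 1 by positivity)
  linarith

end Stmt13Aux

/-- the operator `T(x₁,x₂,x₃,…) = (0, x₁, 0, x₂, 0, x₃, …)`
(with 0-indexed coordinates: `(Tx)ₙ = x_{(n-1)/2}` for odd `n`, `0` for even `n`)
has `σ(T) = 𝔻̄`, `σ_a(T) = σ_uw(T) = ∂𝔻` and `E(T) = ∅`; consequently `T`
satisfies property `(UW_E)`. -/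
theorem stmt13_dilation_shift_example
    (T : l2 →L[ℂ] l2)
    (hT : ∀ (x : l2) (n : ℕ), (T x) n = if Odd n then x ((n - 1) / 2) else 0) :
    spectrum ℂ T = Metric.closedBall (0 : ℂ) 1 ∧
    specA T = Metric.sphere (0 : ℂ) 1 ∧
    specUW T = Metric.sphere (0 : ℂ) 1 ∧
    Eset T = ∅ ∧
    PropUWE T := by
  haveI : Nontrivial l2 := ⟨lp.single 2 0 1, 0, fun hh => by
    have h1 : (lp.single 2 (0:ℕ) (1:ℂ) : ∀ _ : ℕ, ℂ) = 0 := lp.eq_zero_iff_coeFn_eq_zero.1 hh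
    have h2 := congrFun h1 0
    rw [lp.single_apply_self] at h2
    exact one_ne_zero h2⟩
  have hTnorm : ‖T‖ ≤ 1 :=
    T.opNorm_le_bound zero_le_one (fun x => by rw [Stmt13Aux.normT T hT, one_mul])
  have hspec : spectrum ℂ T = Metric.closedBall (0 : ℂ) 1 := by
    apply Set.Subset.antisymm
    · intro lam hlam
      rw [mem_closedBall_zero_iff]
      exact le_trans (spectrum.norm_le_norm_of_mem hlam) hTnorm
    · intro lam hlam
      exact Stmt13Aux.spec_mem T hT (mem_closedBall_zero_iff.1 hlam)
  have hA : specA T = Metric.sphere (0 : ℂ) 1 := by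
    ext lam
    simp only [specA, Set.mem_setOf_eq, mem_sphere_zero_iff_norm]
    constructor
    · intro hmem
      by_contra hne
      exact hmem (Stmt13Aux.bdd_below T hT hne)
    · intro hl hex
      obtain ⟨c, hc, hb⟩ := hex
      obtain ⟨x, hx⟩ := Stmt13Aux.approx T hT hl hc
      exact absurd (hb x) (not_le.2 hx)
  have hUW : specUW T = Metric.sphere (0 : ℂ) 1 := by
    ext lam
    simp only [specUW, Set.mem_setOf_eq, mem_sphere_zero_iff_norm]
    constructor
    · intro hmem
      by_contra hne
      exact hmem (Stmt13Aux.usf_of_ne T hT hne)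
    · intro hl
      exact Stmt13Aux.not_usf T hT hl
  have hE : Eset T = ∅ := by
    rw [Set.eq_empty_iff_forall_notMem]
    rintro lam ⟨-, x, hx0, hx⟩
    exact hx0 (Stmt13Aux.eig_zero T hT lam x hx)
  refine ⟨hspec, hA, hUW, hE, ?_⟩
  show specA T \ specUW T = Eset T
  rw [hA, hUW, hE, Set.diff_self]
end
end

section
/- Let J > 1 and let S be the operator on ℓ²(ℕ) (with orthonormal basis (e_n)_{n≥0}) defined by S e₀ = 0 and S e_n = (√(n(n+1))/(2n+1)) (1/J)^{2n} e_{n−1} for n ≥ 1. Then S is compact, σ(S) = σ_a(S) = σ_uw(S) = E(S) = {0}, and S does not satisfy property (UW_E). -/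
noncomputable section

open Set MeasureTheory

section AuxHelpers
open scoped ENNReal
open Finset

-- auxiliary lemmas
lemma aux_two_toReal : ((2:ℝ≥0∞)).toReal = 2 := by norm_num

instance : Nontrivial l2 := by
  refine ⟨lp.single 2 0 1, 0, fun h => ?_⟩
  have := congrArg (fun f : l2 => (f : ℕ → ℂ) 0) h
  simp [lp.single_apply_self] at this

lemma aux_norm_le_of_coord {y x : l2} {C : ℝ} (hC : 0 ≤ C) (n : ℕ)
    (h : ∀ k, ‖y k‖ ≤ C * ‖x (k + n)‖) : ‖y‖ ≤ C * ‖x‖ := by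
  refine lp.norm_le_of_forall_sum_le (by norm_num) (mul_nonneg hC (norm_nonneg x)) ?_
  intro s
  rw [aux_two_toReal]
  have inj : Function.Injective (fun k : ℕ => k + n) := fun a b hab => by simpa using hab
  calc ∑ i ∈ s, ‖y i‖ ^ (2:ℝ)
      ≤ ∑ i ∈ s, C ^ (2:ℝ) * ‖x (i + n)‖ ^ (2:ℝ) := by
        refine Finset.sum_le_sum fun i _ => ?_
        rw [← Real.mul_rpow hC (norm_nonneg _)]
        exact Real.rpow_le_rpow (norm_nonneg _) (h i) (by norm_num)
    _ = C ^ (2:ℝ) * ∑ i ∈ s.image (fun k => k + n), ‖x i‖ ^ (2:ℝ) := by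
        rw [Finset.sum_image (fun a _ b _ hab => inj hab), Finset.mul_sum]
    _ ≤ C ^ (2:ℝ) * ‖x‖ ^ (2:ℝ) := by
        refine mul_le_mul_of_nonneg_left ?_ (Real.rpow_nonneg hC 2)
        have := lp.sum_rpow_le_norm_rpow (p := 2) (by norm_num) x (s.image (fun k => k + n))
        rwa [aux_two_toReal] at this
    _ = (C * ‖x‖) ^ (2:ℝ) := (Real.mul_rpow hC (norm_nonneg x)).symm

/-- coordinate evaluation as a CLM -/
def aux_eval (k : ℕ) : l2 →L[ℂ] ℂ :=
  LinearMap.mkContinuous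
    { toFun := fun x => x k
      map_add' := fun x y => by simp [lp.coeFn_add]
      map_smul' := fun c x => by simp [lp.coeFn_smul] }
    1 (fun x => by show ‖x k‖ ≤ 1 * ‖x‖; simpa using lp.norm_apply_le_norm (by norm_num) x k)

lemma aux_eval_apply (k : ℕ) (x : l2) : aux_eval k x = x k := rfl

lemma aux_functional_compact (g : l2 →L[ℂ] ℂ) : IsCompactOperator ⇑g := by
  refine ⟨Metric.closedBall 0 ‖g‖, isCompact_closedBall 0 ‖g‖, ?_⟩
  refine Filter.mem_of_superset (Metric.closedBall_mem_nhds 0 one_pos) fun x hx => ?_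
  simp only [Set.mem_preimage, Metric.mem_closedBall, dist_zero_right] at *
  calc ‖g x‖ ≤ ‖g‖ * ‖x‖ := g.le_opNorm x
    _ ≤ ‖g‖ * 1 := mul_le_mul_of_nonneg_left hx (norm_nonneg g)
    _ = ‖g‖ := mul_one _


end AuxHelpers

set_option maxHeartbeats 2000000 in
/-- the weighted backward shift `S e₀ = 0`,
`S eₙ = (√(n(n+1))/(2n+1)) (1/J)^{2n} e_{n-1}` for `n ≥ 1` (equivalently
`(Sx)ₖ = (√((k+1)(k+2))/(2k+3)) (1/J)^{2(k+1)} x_{k+1}`) is compact,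
`σ(S) = σ_a(S) = σ_uw(S) = E(S) = {0}`, and `S` does not satisfy
property `(UW_E)`. -/
theorem stmt15_bergman_shift_example
    (J : ℝ) (hJ : 1 < J) (S : l2 →L[ℂ] l2)
    (hS : ∀ (x : l2) (k : ℕ), (S x) k =
      ((Real.sqrt (((k : ℝ) + 1) * ((k : ℝ) + 2)) / (2 * ((k : ℝ) + 1) + 1) *
        (1 / J) ^ (2 * (k + 1)) : ℝ) : ℂ) * x (k + 1)) :
    IsCompactOperator ⇑S ∧
    spectrum ℂ S = {0} ∧
    specA S = {0} ∧
    specUW S = {0} ∧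
    Eset S = {0} ∧
    ¬ PropUWE S := by
  have hJ0 : 0 < J := lt_trans one_pos hJ
  set w : ℕ → ℝ := fun k =>
    Real.sqrt (((k : ℝ) + 1) * ((k : ℝ) + 2)) / (2 * ((k : ℝ) + 1) + 1) *
      (1 / J) ^ (2 * (k + 1)) with hw_def
  have hw : ∀ (x : l2) (k : ℕ), (S x) k = (w k : ℂ) * x (k + 1) := hS
  set r : ℝ := (1 / J) ^ 2 with hr_def
  have hr0 : 0 < r := by positivity
  have hr1 : r < 1 := by
    rw [hr_def]
    have : 1 / J < 1 := by rw [div_lt_one hJ0]; exact hJ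
    calc (1/J)^2 < 1^2 := by
          exact pow_lt_pow_left₀ this (by positivity) (by norm_num)
      _ = 1 := one_pow 2
  have hwpos : ∀ k, 0 < w k := by
    intro k
    apply mul_pos
    · apply div_pos
      · apply Real.sqrt_pos.mpr; positivity
      · positivity
    · positivity
  have hwle : ∀ k, w k ≤ r ^ (k + 1) := by
    intro k
    have h1 : Real.sqrt (((k : ℝ) + 1) * ((k : ℝ) + 2)) ≤ 2 * ((k : ℝ) + 1) + 1 := by
      rw [show (2 * ((k : ℝ) + 1) + 1) = Real.sqrt ((2 * ((k : ℝ) + 1) + 1)^2) by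
        rw [Real.sqrt_sq (by positivity)]]
      apply Real.sqrt_le_sqrt
      nlinarith [sq_nonneg ((k:ℝ))]
    have h2 : Real.sqrt (((k : ℝ) + 1) * ((k : ℝ) + 2)) / (2 * ((k : ℝ) + 1) + 1) ≤ 1 :=
      div_le_one_of_le₀ h1 (by positivity)
    have h3 : ((1:ℝ) / J) ^ (2 * (k + 1)) = r ^ (k+1) := by
      rw [hr_def, ← pow_mul]
    calc w k ≤ 1 * (1 / J) ^ (2 * (k + 1)) := by
          apply mul_le_mul_of_nonneg_right h2 (by positivity)
      _ = r ^ (k + 1) := by rw [one_mul, h3]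
  -- e0
  set e0 : l2 := lp.single 2 0 1 with he0_def
  have he0 : e0 ≠ 0 := by
    intro h
    have := congrArg (fun f : l2 => (f : ℕ → ℂ) 0) h
    simp [he0_def, lp.single_apply_self] at this
  have hSe0 : S e0 = 0 := by
    apply lp.ext
    funext k
    rw [lp.coeFn_zero, Pi.zero_apply, hw]
    rw [he0_def, lp.single_apply_ne 2 0 _ (Nat.succ_ne_zero k), mul_zero]
  -- power formula
  have hpow : ∀ (n : ℕ) (x : l2) (k : ℕ),
      ((S ^ n) x) k = (∏ j ∈ Finset.range n, (w (k + j) : ℂ)) * x (k + n) := by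
    intro n
    induction n with
    | zero => intro x k; simp
    | succ n ih =>
      intro x k
      rw [pow_succ, ContinuousLinearMap.mul_apply, ih (S x) k, hw x (k + n)]
      rw [Finset.prod_range_succ]
      push_cast
      ring_nf
  -- operator norm bound
  have hopn : ∀ (n : ℕ) (x : l2), ‖(S ^ n) x‖ ≤ r ^ (∑ j ∈ Finset.range n, (j + 1)) * ‖x‖ := by
    intro n x
    apply aux_norm_le_of_coord (by positivity) n
    intro k
    rw [hpow n x k, norm_mul]
    apply mul_le_mul_of_nonneg_right _ (norm_nonneg _)
    rw [norm_prod]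
    rw [← Finset.prod_pow_eq_pow_sum]
    refine Finset.prod_le_prod (fun j _ => norm_nonneg _) fun j _ => ?_
    rw [Complex.norm_real, Real.norm_eq_abs, abs_of_pos (hwpos _)]
    calc w (k + j) ≤ r ^ (k + j + 1) := hwle _
      _ ≤ r ^ (j + 1) := pow_le_pow_of_le_one hr0.le hr1.le (by omega)
  -- spectrum ⊆ {0}
  have hspec_sub : spectrum ℂ S ⊆ {0} := by
    intro lam hlam
    have key : ∀ m : ℕ, 1 ≤ m → ‖lam‖ ^ 2 ≤ r ^ m := by
      intro m hm
      have hmem : lam ^ (2 * m) ∈ spectrum ℂ (S ^ (2 * m)) := by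
        rw [spectrum.map_pow]
        exact Set.mem_image_of_mem _ hlam
      have h1 : ‖lam ^ (2 * m)‖ ≤ ‖S ^ (2 * m)‖ := spectrum.norm_le_norm_of_mem hmem
      have h2 : ‖S ^ (2 * m)‖ ≤ r ^ (∑ j ∈ Finset.range (2 * m), (j + 1)) := by
        apply ContinuousLinearMap.opNorm_le_bound _ (by positivity)
        exact hopn (2 * m)
      have h3 : m * m ≤ ∑ j ∈ Finset.range (2 * m), (j + 1) := by
        calc m * m = (Finset.Ico m (2 * m)).card * m := by
              rw [Nat.card_Ico]; congr 1; omega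
          _ ≤ ∑ j ∈ Finset.Ico m (2 * m), (j + 1) := by
              rw [← smul_eq_mul]
              exact Finset.card_nsmul_le_sum _ _ _ fun i hi => by
                have := (Finset.mem_Ico.mp hi).1; omega
          _ ≤ ∑ j ∈ Finset.range (2 * m), (j + 1) := by
              apply Finset.sum_le_sum_of_subset
              intro i hi
              simp only [Finset.mem_Ico, Finset.mem_range] at *
              omega
      have h4 : r ^ (∑ j ∈ Finset.range (2 * m), (j + 1)) ≤ r ^ (m * m) :=
        pow_le_pow_of_le_one hr0.le hr1.le h3
      have h5 : ‖lam‖ ^ (2 * m) ≤ r ^ (m * m) := by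
        rw [← norm_pow]
        exact le_trans h1 (le_trans h2 h4)
      have h6 : (‖lam‖ ^ 2) ^ m ≤ (r ^ m) ^ m := by
        rw [← pow_mul, ← pow_mul]
        exact h5
      exact (pow_le_pow_iff_left₀ (by positivity) (by positivity) (by omega)).mp h6
    have hlim : Filter.Tendsto (fun m : ℕ => r ^ m) Filter.atTop (nhds 0) :=
      tendsto_pow_atTop_nhds_zero_of_lt_one hr0.le hr1
    have hle0 : ‖lam‖ ^ 2 ≤ 0 :=
      ge_of_tendsto hlim (Filter.eventually_atTop.mpr ⟨1, key⟩)
    have : ‖lam‖ = 0 := by nlinarith [norm_nonneg lam]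
    exact Set.mem_singleton_iff.mpr (norm_eq_zero.mp this)
  have hspec : spectrum ℂ S = {0} := by
    refine Set.eq_singleton_iff_nonempty_unique_mem.mpr ⟨spectrum.nonempty S, fun x hx => hspec_sub hx⟩
  have hunit : ∀ lam : ℂ, lam ≠ 0 → IsUnit (algebraMap ℂ (l2 →L[ℂ] l2) lam - S) := by
    intro lam hlam
    have : lam ∉ spectrum ℂ S := by rw [hspec]; simpa using hlam
    exact spectrum.notMem_iff.mp this
  have he0norm : ‖e0‖ = 1 := by
    rw [he0_def]
    have := lp.norm_single (E := fun _ : ℕ => ℂ) (p := 2) (by norm_num) 0 (1:ℂ)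
    simpa using this
  have hTapp : ∀ (lam : ℂ) (x : l2), opShift S lam x = S x - lam • x := by
    intro lam x
    simp [opShift, ContinuousLinearMap.sub_apply, ContinuousLinearMap.smul_apply]
  have hfacts : ∀ lam : ℂ, lam ≠ 0 →
      (∃ c > 0, ∀ x : l2, c * ‖x‖ ≤ ‖S x - lam • x‖) ∧
      LinearMap.ker (opShift S lam : l2 →ₗ[ℂ] l2) = ⊥ ∧ LinearMap.range (opShift S lam : l2 →ₗ[ℂ] l2) = ⊤ := by
    intro lam hlam
    obtain ⟨u, hu⟩ := hunit lam hlam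
    set A : l2 →L[ℂ] l2 := algebraMap ℂ (l2 →L[ℂ] l2) lam - S with hA_def
    set B : l2 →L[ℂ] l2 := ↑u⁻¹ with hB_def
    have hBA : ∀ x : l2, B (A x) = x := by
      intro x
      have h2 : B * A = 1 := by rw [hB_def, ← hu]; exact u.inv_mul
      have h3 := congrArg (fun T : l2 →L[ℂ] l2 => T x) h2
      simpa using h3
    have hAB : ∀ x : l2, A (B x) = x := by
      intro x
      have h2 : A * B = 1 := by rw [hB_def, ← hu]; exact u.mul_inv
      have h3 := congrArg (fun T : l2 →L[ℂ] l2 => T x) h2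
      simpa using h3
    have hAx : ∀ x : l2, A x = -(S x - lam • x) := by
      intro x
      have h0 : A = lam • (1 : l2 →L[ℂ] l2) - S := by
        rw [hA_def, Algebra.algebraMap_eq_smul_one]
      rw [h0, ContinuousLinearMap.sub_apply, ContinuousLinearMap.smul_apply,
        ContinuousLinearMap.one_apply, neg_sub]
    have hBne : B ≠ 0 := by
      intro h
      apply he0
      have := hBA e0
      rw [h] at this
      simpa using this.symm
    have hBpos : 0 < ‖B‖ := by
      rcases lt_or_eq_of_le (norm_nonneg B) with h | h
      · exact h
      · exact absurd (ContinuousLinearMap.opNorm_zero_iff B |>.mp h.symm) hBne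
    refine ⟨⟨‖B‖⁻¹, inv_pos.mpr hBpos, ?_⟩, ?_, ?_⟩
    · intro x
      have h1 : ‖x‖ ≤ ‖B‖ * ‖S x - lam • x‖ := by
        calc ‖x‖ = ‖B (A x)‖ := by rw [hBA]
          _ ≤ ‖B‖ * ‖A x‖ := B.le_opNorm _
          _ = ‖B‖ * ‖S x - lam • x‖ := by rw [hAx, norm_neg]
      rw [inv_mul_le_iff₀ hBpos]
      linarith [h1]
    · rw [Submodule.eq_bot_iff]
      intro x hx
      have hx0 : opShift S lam x = 0 := hx
      have : A x = 0 := by rw [hAx, ← hTapp, hx0, neg_zero]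
      calc x = B (A x) := (hBA x).symm
        _ = 0 := by rw [this, map_zero]
    · rw [Submodule.eq_top_iff']
      intro x
      refine ⟨-(B x), ?_⟩
      have : opShift S lam (-(B x)) = -(opShift S lam (B x)) := map_neg _ _
      rw [ContinuousLinearMap.coe_coe, this, hTapp, ← hAx, hAB]
  have hspecA : specA S = {0} := by
    ext lam
    simp only [specA, Set.mem_setOf_eq, Set.mem_singleton_iff]
    constructor
    · intro h
      by_contra hne
      exact h ((hfacts lam hne).1)
    · rintro rfl
      rintro ⟨c, hc, hx⟩
      have h1 := hx e0
      rw [hSe0, he0norm, zero_smul, sub_zero, norm_zero, mul_one] at h1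
      exact absurd h1 (not_le.mpr hc)
  have hTop0 : opShift S 0 = S := by
    simp [opShift]
  have hsingle_range : ∀ (i : ℕ) (a : ℂ), lp.single 2 i a ∈ LinearMap.range (S : l2 →ₗ[ℂ] l2) := by
    intro i a
    have hwi : (w i : ℂ) ≠ 0 := by
      exact_mod_cast (hwpos i).ne'
    refine ⟨((w i : ℂ))⁻¹ • lp.single 2 (i+1) a, ?_⟩
    rw [ContinuousLinearMap.coe_coe]
    apply lp.ext
    funext k
    rw [hw, lp.coeFn_smul, Pi.smul_apply]
    rcases eq_or_ne k i with rfl | hki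
    · rw [lp.single_apply_self, lp.single_apply_self, smul_eq_mul]
      field_simp
    · rw [lp.single_apply_ne 2 (i+1) _ (by omega : k + 1 ≠ i + 1),
        lp.single_apply_ne 2 i _ hki, smul_zero, mul_zero]
  have hdense : Dense (LinearMap.range (S : l2 →ₗ[ℂ] l2) : Set l2) := by
    intro f
    have hsum := lp.hasSum_single (E := fun _ : ℕ => ℂ) (p := 2) (by norm_num) f
    refine mem_closure_of_tendsto hsum (Filter.Eventually.of_forall fun s => ?_)
    exact Submodule.sum_mem _ fun i _ => hsingle_range i (f i)
  have hspecUW : specUW S = {0} := by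
    ext lam
    simp only [specUW, Set.mem_setOf_eq, Set.mem_singleton_iff]
    constructor
    · intro h
      by_contra hne
      obtain ⟨-, hker, hrange⟩ := hfacts lam hne
      refine h ⟨⟨?_, ?_⟩, ?_⟩
      · rw [hrange]
        simpa using isClosed_univ
      · rw [hker]
        infer_instance
      · unfold indexNonpos
        rw [hker, rank_bot]
        exact zero_le
    · rintro rfl
      rintro ⟨⟨hclosed, -⟩, hind⟩
      rw [hTop0] at hclosed hind
      have hrtop : LinearMap.range (S : l2 →ₗ[ℂ] l2) = ⊤ := by
        have hset : (LinearMap.range (S : l2 →ₗ[ℂ] l2) : Set l2) = Set.univ := by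
          rw [← hclosed.closure_eq, hdense.closure_eq]
        rw [Submodule.eq_top_iff']
        intro x
        show x ∈ (LinearMap.range (S : l2 →ₗ[ℂ] l2) : Set l2)
        rw [hset]
        trivial
      haveI hq : Subsingleton (l2 ⧸ LinearMap.range (S : l2 →ₗ[ℂ] l2)) :=
        Submodule.Quotient.subsingleton_iff.mpr hrtop
      haveI hk : Nontrivial (LinearMap.ker (S : l2 →ₗ[ℂ] l2)) := by
        refine ⟨⟨e0, LinearMap.mem_ker.mpr hSe0⟩, 0, fun h => ?_⟩
        exact he0 (by simpa using congrArg Subtype.val h)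
      have h1 : (0 : Cardinal) < Module.rank ℂ (LinearMap.ker (S : l2 →ₗ[ℂ] l2)) := rank_pos
      have h2 : Module.rank ℂ (l2 ⧸ LinearMap.range (S : l2 →ₗ[ℂ] l2)) = 0 := rank_subsingleton' _ _
      unfold indexNonpos at hind
      rw [h2] at hind
      exact h1.not_ge hind
  have hEset : Eset S = {0} := by
    ext lam
    simp only [Eset, Set.mem_setOf_eq, Set.mem_singleton_iff]
    constructor
    · rintro ⟨⟨hmem, -⟩, -⟩
      rw [hspec] at hmem
      exact hmem
    · rintro rfl
      refine ⟨⟨by rw [hspec]; rfl, 1, one_pos, ?_⟩, e0, he0, ?_⟩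
      · rw [hspec, Set.inter_eq_left.mpr (by simp [Metric.mem_ball] : ({0} : Set ℂ) ⊆ Metric.ball 0 1)]
      · rw [hSe0, zero_smul]
  have hnotUWE : ¬ PropUWE S := by
    intro h
    unfold PropUWE at h
    rw [hspecA, hspecUW, hEset, Set.diff_self] at h
    exact Set.singleton_ne_empty (0:ℂ) h.symm
  -- compactness
  set F : ℕ → (l2 →L[ℂ] l2) := fun N => ∑ k ∈ Finset.range N,
    ((ContinuousLinearMap.id ℂ ℂ).smulRight (lp.single 2 k (1:ℂ))).comp
      ((w k : ℂ) • aux_eval (k+1)) with hF_def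
  have hFapply : ∀ (N : ℕ) (x : l2) (m : ℕ), (F N x) m =
      if m < N then (w m : ℂ) * x (m+1) else 0 := by
    intro N x m
    rw [hF_def]
    rw [ContinuousLinearMap.sum_apply, lp.coeFn_sum, Finset.sum_apply]
    have hterm : ∀ k, (((((ContinuousLinearMap.id ℂ ℂ).smulRight (lp.single 2 k (1:ℂ))).comp
        ((w k : ℂ) • aux_eval (k+1))) x : l2) m)
        = if m = k then (w k : ℂ) * x (k+1) else 0 := by
      intro k
      rw [ContinuousLinearMap.comp_apply, ContinuousLinearMap.smulRight_apply,
        ContinuousLinearMap.id_apply, ContinuousLinearMap.smul_apply]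
      rw [lp.coeFn_smul, Pi.smul_apply]
      rcases eq_or_ne m k with rfl | hmk
      · rw [lp.single_apply_self, if_pos rfl, aux_eval_apply, smul_eq_mul, smul_eq_mul, mul_one]
      · rw [lp.single_apply_ne 2 k _ hmk, if_neg hmk, smul_zero]
    simp_rw [hterm]
    rw [Finset.sum_ite_eq (Finset.range N) m (fun k => (w k : ℂ) * x (k+1))]
    simp [Finset.mem_range]
  have hcompact : ∀ N, IsCompactOperator ⇑(F N) := by
    intro N
    rw [hF_def]
    have : ∀ s : Finset ℕ, IsCompactOperator
        ⇑(∑ k ∈ s, (((ContinuousLinearMap.id ℂ ℂ).smulRight (lp.single 2 k (1:ℂ))).comp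
          ((w k : ℂ) • aux_eval (k+1)))) := by
      intro s
      classical
      induction s using Finset.induction_on with
      | empty => simpa using isCompactOperator_zero
      | @insert a s ha ih =>
        rw [Finset.sum_insert ha, ContinuousLinearMap.coe_add']
        refine IsCompactOperator.add ?_ ih
        rw [ContinuousLinearMap.coe_comp']
        exact (aux_functional_compact _).clm_comp _
    exact this (Finset.range N)
  have hFS : ∀ N : ℕ, ‖S - F N‖ ≤ r ^ (N+1) := by
    intro N
    apply ContinuousLinearMap.opNorm_le_bound _ (by positivity)
    intro x
    apply aux_norm_le_of_coord (by positivity) 1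
    intro m
    rw [ContinuousLinearMap.sub_apply, lp.coeFn_sub, Pi.sub_apply, hw, hFapply]
    by_cases hm : m < N
    · rw [if_pos hm, sub_self, norm_zero]
      positivity
    · rw [if_neg hm, sub_zero, norm_mul, Complex.norm_real, Real.norm_eq_abs,
        abs_of_pos (hwpos m)]
      apply mul_le_mul_of_nonneg_right _ (norm_nonneg _)
      calc w m ≤ r ^ (m+1) := hwle m
        _ ≤ r ^ (N+1) := pow_le_pow_of_le_one hr0.le hr1.le (by omega)
  have htend : Filter.Tendsto F Filter.atTop (nhds S) := by
    rw [tendsto_iff_norm_sub_tendsto_zero]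
    have hlim : Filter.Tendsto (fun N : ℕ => r ^ (N+1)) Filter.atTop (nhds 0) :=
      (tendsto_pow_atTop_nhds_zero_of_lt_one hr0.le hr1).comp
        (Filter.tendsto_add_atTop_nat 1)
    refine squeeze_zero (fun N => norm_nonneg _) (fun N => ?_) hlim
    rw [norm_sub_rev]
    exact hFS N
  have hcpt : IsCompactOperator ⇑S :=
    isCompactOperator_of_tendsto htend (Filter.Eventually.of_forall hcompact)
  exact ⟨hcpt, hspec, hspecA, hspecUW, hEset, hnotUWE⟩
end
end

section
/- Let H be an infinite-dimensional complex separable Hilbert space and T ∈ B(H) such that the Weyl spectrum σ_w(T) has no isolated points. Then for every compact operator K on H, every λ ∈ E(T + K) satisfies: T + K − λ is semi-Fredholm with ind(T + K − λ) ≤ 0. -/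
noncomputable section

open Set MeasureTheory

section AuxWeyl

set_option linter.unusedSectionVars false
set_option maxHeartbeats 1000000

variable {H : Type*} [NormedAddCommGroup H] [InnerProductSpace ℂ H] [CompleteSpace H]

/-- Fredholm of index zero, packaged. -/
def WeylOp (S : H →L[ℂ] H) : Prop :=
  IsClosed (LinearMap.range (S : H →ₗ[ℂ] H) : Set H) ∧ FiniteDimensional ℂ (LinearMap.ker (S : H →ₗ[ℂ] H)) ∧
    FiniteDimensional ℂ (H ⧸ LinearMap.range (S : H →ₗ[ℂ] H)) ∧
    Module.rank ℂ (LinearMap.ker (S : H →ₗ[ℂ] H)) = Module.rank ℂ (H ⧸ LinearMap.range (S : H →ₗ[ℂ] H))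

lemma compact_of_finiteRank {S : H →L[ℂ] H} (h : FiniteDimensional ℂ (LinearMap.range (S : H →ₗ[ℂ] H))) :
    IsCompactOperator ⇑S := by
  haveI := h
  refine ⟨(↑) '' (Metric.closedBall (0 : LinearMap.range (S : H →ₗ[ℂ] H)) (‖S‖ + 1)), ?_, ?_⟩
  · exact (isCompact_closedBall _ _).image continuous_subtype_val
  · refine Filter.mem_of_superset (Metric.ball_mem_nhds 0 one_pos) ?_
    intro x hx
    refine ⟨⟨S x, LinearMap.mem_range_self _ x⟩, ?_, rfl⟩
    simp only [Metric.mem_closedBall, dist_zero_right]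
    have : ‖(⟨S x, LinearMap.mem_range_self _ x⟩ : LinearMap.range (S : H →ₗ[ℂ] H))‖ = ‖S x‖ := rfl
    rw [this]
    calc ‖S x‖ ≤ ‖S‖ * ‖x‖ := S.le_opNorm x
      _ ≤ ‖S‖ * 1 := by
          exact mul_le_mul_of_nonneg_left (le_of_lt (by simpa using hx)) (norm_nonneg S)
      _ ≤ ‖S‖ + 1 := by linarith [norm_nonneg S]

lemma weyl_equiv_mul (e : H ≃L[ℂ] H) {A : H →L[ℂ] H} (h : WeylOp A) :
    WeylOp ((e : H →L[ℂ] H) * A) := by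
  obtain ⟨hcl, hker, hcoker, hrank⟩ := h
  have hker' : LinearMap.ker (((e : H →L[ℂ] H) * A : H →L[ℂ] H) : H →ₗ[ℂ] H) = LinearMap.ker (A : H →ₗ[ℂ] H) := by
    ext x
    simp only [LinearMap.mem_ker, ContinuousLinearMap.mul_apply]
    constructor
    · intro hx
      have := congrArg e.symm hx
      simpa using this
    · intro hx; simp [hx]
  have hrange' : LinearMap.range (((e : H →L[ℂ] H) * A : H →L[ℂ] H) : H →ₗ[ℂ] H) =
      Submodule.map (e.toLinearEquiv : H →ₗ[ℂ] H) (LinearMap.range (A : H →ₗ[ℂ] H)) := by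
    ext y
    simp only [LinearMap.mem_range, Submodule.mem_map, ContinuousLinearMap.mul_apply]
    constructor
    · rintro ⟨x, rfl⟩; exact ⟨A x, ⟨x, rfl⟩, rfl⟩
    · rintro ⟨z, ⟨x, rfl⟩, rfl⟩; exact ⟨x, rfl⟩
  have hq : (H ⧸ LinearMap.range (A : H →ₗ[ℂ] H)) ≃ₗ[ℂ]
      (H ⧸ LinearMap.range (((e : H →L[ℂ] H) * A : H →L[ℂ] H) : H →ₗ[ℂ] H)) :=
    Submodule.Quotient.equiv _ _ e.toLinearEquiv hrange'.symm
  refine ⟨?_, ?_, ?_, ?_⟩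
  · rw [hrange']
    have : (Submodule.map (e.toLinearEquiv : H →ₗ[ℂ] H) (LinearMap.range (A : H →ₗ[ℂ] H)) : Set H)
        = e '' (LinearMap.range (A : H →ₗ[ℂ] H) : Set H) := rfl
    rw [this]
    exact e.toHomeomorph.isClosedMap _ hcl
  · rw [hker']; exact hker
  · exact Module.Finite.equiv hq
  · rw [hker', ← hq.rank_eq]; exact hrank

lemma weyl_one_add_finiteRank {F : H →L[ℂ] H}
    (hF : FiniteDimensional ℂ (LinearMap.range (F : H →ₗ[ℂ] H))) : WeylOp (1 + F) := by
  classical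
  set A := (1 : H →L[ℂ] H) + F with hA
  haveI : CompleteSpace (LinearMap.ker (F : H →ₗ[ℂ] H)) := F.isClosed_ker.completeSpace_coe
  haveI hperpfin : FiniteDimensional ℂ ((LinearMap.ker (F : H →ₗ[ℂ] H))ᗮ : Submodule ℂ H) := by
    have e1 : ((LinearMap.ker (F : H →ₗ[ℂ] H))ᗮ : Submodule ℂ H) ≃ₗ[ℂ] (H ⧸ LinearMap.ker (F : H →ₗ[ℂ] H)) :=
      (Submodule.quotientEquivOfIsCompl _ _
        (Submodule.isCompl_orthogonal_of_hasOrthogonalProjection)).symm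
    have e2 : (H ⧸ LinearMap.ker (F : H →ₗ[ℂ] H)) ≃ₗ[ℂ] LinearMap.range (F : H →ₗ[ℂ] H) :=
      (F : H →ₗ[ℂ] H).quotKerEquivRange
    exact Module.Finite.equiv (e1.trans e2).symm
  set W : Submodule ℂ H := LinearMap.range (F : H →ₗ[ℂ] H) ⊔ (LinearMap.ker (F : H →ₗ[ℂ] H))ᗮ with hW
  haveI : FiniteDimensional ℂ W := Submodule.finiteDimensional_sup _ _
  haveI : CompleteSpace W := FiniteDimensional.complete ℂ W
  have hFW : ∀ x : H, F x ∈ W := fun x =>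
    le_sup_left (α := Submodule ℂ H) (LinearMap.mem_range_self _ x)
  have hWperp : ∀ x ∈ Wᗮ, F x = 0 := by
    intro x hx
    have h1 : Wᗮ ≤ ((LinearMap.ker (F : H →ₗ[ℂ] H))ᗮ)ᗮ := Submodule.orthogonal_le le_sup_right
    rw [Submodule.orthogonal_orthogonal] at h1
    exact h1 hx
  have hAW : ∀ x ∈ W, A x ∈ W := by
    intro x hx
    have : A x = x + F x := by simp [hA]
    rw [this]; exact W.add_mem hx (hFW x)
  have hAfix : ∀ x ∈ Wᗮ, A x = x := by
    intro x hx
    simp [hA, hWperp x hx]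
  set A' : W →ₗ[ℂ] W := (A : H →ₗ[ℂ] H).restrict hAW with hA'
  set P := Submodule.orthogonalProjectionOnto W with hP
  have hPW : ∀ v : W, P (v : H) = v := fun v => Submodule.orthogonalProjectionOnto_mem_subspace_eq_self v
  have hPperp : ∀ x : H, x - (P x : H) ∈ Wᗮ := fun x => Submodule.sub_starProjection_mem_orthogonal x
  have hA'c : ∀ w : W, ((A' w : W) : H) = A (w : H) := fun w => rfl
  -- kernel
  have hkerA : LinearMap.ker (A : H →ₗ[ℂ] H) = Submodule.map W.subtype (LinearMap.ker A') := by
    ext x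
    constructor
    · intro hx
      have hx0 : A x = 0 := hx
      have hxW : x ∈ W := by
        have h1 : x + F x = 0 := by simpa [hA] using hx0
        have h2 : x = -(F x) := eq_neg_of_add_eq_zero_left h1
        rw [h2]; exact W.neg_mem (hFW x)
      refine ⟨⟨x, hxW⟩, ?_, rfl⟩
      simp only [SetLike.mem_coe, LinearMap.mem_ker]
      apply Subtype.ext
      show ((A' ⟨x, hxW⟩ : W) : H) = ((0 : W) : H)
      rw [hA'c]; simpa using hx0
    · rintro ⟨w, hw, rfl⟩
      simp only [SetLike.mem_coe, LinearMap.mem_ker] at hw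
      show A (w : H) = 0
      rw [← hA'c, hw]; rfl
  have eker : (LinearMap.ker A' : Type _) ≃ₗ[ℂ] LinearMap.ker (A : H →ₗ[ℂ] H) := by
    rw [hkerA]
    exact Submodule.equivMapOfInjective W.subtype W.injective_subtype _
  -- range
  have hrangeA : LinearMap.range (A : H →ₗ[ℂ] H) =
      Submodule.comap (P : H →ₗ[ℂ] W) (LinearMap.range A') := by
    ext x
    simp only [Submodule.mem_comap, ContinuousLinearMap.coe_coe, LinearMap.mem_range]
    constructor
    · rintro ⟨y, rfl⟩
      refine ⟨P y, ?_⟩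
      have hy : A y = A ((P y : W) : H) + (y - ((P y : W) : H)) := by
        conv_lhs => rw [show y = ((P y : W) : H) + (y - ((P y : W) : H)) by abel]
        rw [map_add, hAfix _ (hPperp y)]
      apply Subtype.ext
      rw [hA'c]
      have : P (A y) = P (A ((P y : W) : H)) + P (y - ((P y : W) : H)) := by
        rw [hy, map_add]
      rw [this, Submodule.orthogonalProjectionOnto_apply_of_mem_orthogonal (hPperp y),
        add_zero]
      have hm : A ((P y : W) : H) ∈ W := hAW _ (P y).2
      have h2 : P (A ((P y : W) : H)) = ⟨A ((P y : W) : H), hm⟩ := hPW ⟨_, hm⟩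
      rw [h2]
    · rintro ⟨w, hw⟩
      refine ⟨(w : H) + (x - ((P x : W) : H)), ?_⟩
      rw [map_add, hAfix _ (hPperp x)]
      have h1 : A (w : H) = ((A' w : W) : H) := rfl
      rw [h1, hw]
      abel
  set g : H →ₗ[ℂ] (W ⧸ LinearMap.range A') := (LinearMap.range A').mkQ ∘ₗ (P : H →ₗ[ℂ] W) with hg
  have hgker : LinearMap.ker g = LinearMap.range (A : H →ₗ[ℂ] H) := by
    rw [hrangeA, hg, LinearMap.ker_comp, Submodule.ker_mkQ]
  have hgsurj : Function.Surjective g := by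
    intro z
    obtain ⟨w, rfl⟩ := Submodule.Quotient.mk_surjective _ z
    refine ⟨(w : H), ?_⟩
    simp [hg, hPW w]
  have ecoker : (H ⧸ LinearMap.range (A : H →ₗ[ℂ] H)) ≃ₗ[ℂ] (W ⧸ LinearMap.range A') :=
    (Submodule.quotEquivOfEq _ _ hgker.symm).trans (g.quotKerEquivOfSurjective hgsurj)
  refine ⟨?_, ?_, ?_, ?_⟩
  · have hset : (LinearMap.range (A : H →ₗ[ℂ] H) : Set H) = ⇑P ⁻¹' ((LinearMap.range A' : Submodule ℂ W) : Set W) := by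
      rw [hrangeA]; rfl
    rw [hset]
    exact (Submodule.closed_of_finiteDimensional _).preimage P.continuous
  · exact Module.Finite.equiv eker
  · exact Module.Finite.equiv ecoker.symm
  · have h1 := Submodule.finrank_quotient_add_finrank (LinearMap.range A')
    have h2 := LinearMap.finrank_range_add_finrank_ker A'
    have h3 : Module.finrank ℂ (LinearMap.ker A') = Module.finrank ℂ (W ⧸ LinearMap.range A') := by
      omega
    rw [← eker.rank_eq, ecoker.rank_eq, ← Module.finrank_eq_rank, ← Module.finrank_eq_rank]
    exact_mod_cast h3

lemma exists_finiteRank_approx (C : H →L[ℂ] H) (hC : IsCompactOperator ⇑C) :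
    ∃ F : H →L[ℂ] H, FiniteDimensional ℂ (LinearMap.range (F : H →ₗ[ℂ] H)) ∧ ‖C - F‖ < 1 := by
  have hcpt : IsCompact (closure (⇑C '' Metric.closedBall 0 1)) :=
    hC.isCompact_closure_image_closedBall (𝕜₁ := ℂ) 1
  obtain ⟨t, htfin, hcover⟩ := (Metric.totallyBounded_iff).1 hcpt.totallyBounded
    (1/4) (by norm_num)
  set W : Submodule ℂ H := Submodule.span ℂ t with hWdef
  haveI : FiniteDimensional ℂ W := FiniteDimensional.span_of_finite ℂ htfin
  haveI : CompleteSpace W := FiniteDimensional.complete ℂ W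
  set P := Submodule.orthogonalProjectionOnto W with hPdef
  set F : H →L[ℂ] H := W.subtypeL.comp (P.comp C) with hFdef
  refine ⟨F, ?_, ?_⟩
  · apply Submodule.finiteDimensional_of_le (S₂ := W)
    rintro y ⟨x, rfl⟩
    exact (P (C x)).2
  · have key : ∀ x : H, ‖x‖ ≤ 1 → ‖(C - F) x‖ ≤ 1/2 := by
      intro x hx
      have hmem : C x ∈ closure (⇑C '' Metric.closedBall 0 1) :=
        subset_closure ⟨x, by simpa [Metric.mem_closedBall] using hx, rfl⟩
      obtain ⟨y, hyt, hy⟩ := by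
        have := hcover hmem
        simpa using this
      have hyW : y ∈ W := Submodule.subset_span hyt
      have hmin : ‖C x - ↑(P (C x))‖ = ⨅ w : W, ‖C x - ↑w‖ :=
        Submodule.starProjection_minimal (C x)
      have hle : (⨅ w : W, ‖C x - (w : H)‖) ≤ ‖C x - y‖ := by
        refine ciInf_le ⟨0, ?_⟩ (⟨y, hyW⟩ : W)
        rintro b ⟨w, rfl⟩
        positivity
      have h1 : ‖(C - F) x‖ = ‖C x - ↑(P (C x))‖ := by
        simp [hFdef, ContinuousLinearMap.sub_apply]
      rw [h1, hmin]
      have h2 : ‖C x - y‖ ≤ 1/2 := by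
        have : dist (C x) y < 1/4 := by simpa [Metric.mem_ball] using hy
        rw [dist_eq_norm] at this
        linarith
      linarith [le_trans hle h2]
    have hbound : ‖C - F‖ ≤ 1/2 := by
      refine ContinuousLinearMap.opNorm_le_bound _ (by norm_num) ?_
      intro x
      rcases eq_or_ne x 0 with rfl | hx0
      · simp
      · set u : H := ((‖x‖ : ℂ))⁻¹ • x with hu
        have hxn : (0:ℝ) < ‖x‖ := norm_pos_iff.2 hx0
        have hun : ‖u‖ ≤ 1 := by
          rw [hu, norm_smul]
          simp [norm_inv, hxn.ne']
        have hxu : x = (‖x‖ : ℂ) • u := by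
          rw [hu, smul_smul]
          rw [mul_inv_cancel₀ (by exact_mod_cast hxn.ne')]
          simp
        calc ‖(C - F) x‖ = ‖(C - F) ((‖x‖ : ℂ) • u)‖ := by rw [← hxu]
          _ = ‖x‖ * ‖(C - F) u‖ := by rw [_root_.map_smul, norm_smul]; simp
          _ ≤ ‖x‖ * (1/2) := by
              exact mul_le_mul_of_nonneg_left (key u hun) (le_of_lt hxn)
          _ = 1/2 * ‖x‖ := by ring
    linarith

lemma weyl_unit_mul {u : (H →L[ℂ] H)ˣ} {A : H →L[ℂ] H} (h : WeylOp A) : WeylOp ((u : H →L[ℂ] H) * A) := by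
  have he : ((ContinuousLinearEquiv.unitsEquiv ℂ H u : H ≃L[ℂ] H) : H →L[ℂ] H) = ↑u := by
    ext x; rfl
  have := weyl_equiv_mul (ContinuousLinearEquiv.unitsEquiv ℂ H u) h
  rwa [he] at this

lemma weyl_one : WeylOp (1 : H →L[ℂ] H) := by
  have hr : LinearMap.range ((1 : H →L[ℂ] H) : H →ₗ[ℂ] H) = ⊤ := by
    ext x
    constructor
    · intro _; trivial
    · intro _; exact ⟨x, rfl⟩
  have hk : LinearMap.ker ((1 : H →L[ℂ] H) : H →ₗ[ℂ] H) = ⊥ := by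
    ext x; simp
  haveI hsub : Subsingleton (H ⧸ LinearMap.range ((1 : H →L[ℂ] H) : H →ₗ[ℂ] H)) := by
    rw [hr]; exact Submodule.Quotient.subsingleton_iff.2 rfl
  refine ⟨?_, ?_, ?_, ?_⟩
  · rw [hr]; simpa using isClosed_univ
  · rw [hk]; infer_instance
  · infer_instance
  · rw [hk]
    have h1 : Module.rank ℂ (↥(⊥ : Submodule ℂ H)) = 0 := rank_subsingleton' _ _
    have h2 : Module.rank ℂ (H ⧸ LinearMap.range ((1 : H →L[ℂ] H) : H →ₗ[ℂ] H)) = 0 := rank_subsingleton' _ _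
    rw [h1, h2]

lemma weyl_equiv_add_compact (e : H ≃L[ℂ] H) {C : H →L[ℂ] H} (hC : IsCompactOperator ⇑C) :
    WeylOp ((e : H →L[ℂ] H) + C) := by
  set C' : H →L[ℂ] H := (e.symm : H →L[ℂ] H) * C with hC'def
  have hC' : IsCompactOperator ⇑C' := by
    have : ⇑C' = (⇑(e.symm : H →L[ℂ] H)) ∘ ⇑C := rfl
    rw [this]
    exact hC.continuous_comp (e.symm : H →L[ℂ] H).continuous
  obtain ⟨F, hFfin, hFnorm⟩ := exists_finiteRank_approx C' hC'
  have hunit : IsUnit ((1 : H →L[ℂ] H) + (C' - F)) := by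
    have h := isUnit_one_sub_of_norm_lt_one (x := -(C' - F)) (by rwa [norm_neg])
    have : (1 : H →L[ℂ] H) - -(C' - F) = 1 + (C' - F) := by abel
    rwa [this] at h
  obtain ⟨u, hu⟩ := hunit
  have hfin2 : FiniteDimensional ℂ (LinearMap.range (((↑u⁻¹ : H →L[ℂ] H) * F : H →L[ℂ] H) : H →ₗ[ℂ] H)) := by
    have hmap : LinearMap.range (((↑u⁻¹ : H →L[ℂ] H) * F : H →L[ℂ] H) : H →ₗ[ℂ] H) =
        Submodule.map ((↑u⁻¹ : H →L[ℂ] H) : H →ₗ[ℂ] H) (LinearMap.range (F : H →ₗ[ℂ] H)) := by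
      ext y
      simp only [LinearMap.mem_range, Submodule.mem_map, ContinuousLinearMap.mul_apply,
        ContinuousLinearMap.coe_coe]
      constructor
      · rintro ⟨x, rfl⟩; exact ⟨F x, ⟨x, rfl⟩, rfl⟩
      · rintro ⟨z, ⟨x, rfl⟩, rfl⟩; exact ⟨x, rfl⟩
    rw [hmap]
    exact Module.Finite.map _ _
  have h2 : WeylOp ((u : H →L[ℂ] H) * ((1 : H →L[ℂ] H) + (↑u⁻¹ : H →L[ℂ] H) * F)) :=
    weyl_unit_mul (weyl_one_add_finiteRank hfin2)
  have h3 : (u : H →L[ℂ] H) * ((1 : H →L[ℂ] H) + (↑u⁻¹ : H →L[ℂ] H) * F) = 1 + C' := by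
    rw [mul_add, mul_one, ← mul_assoc]
    have huu : (u : H →L[ℂ] H) * (↑u⁻¹ : H →L[ℂ] H) = 1 := u.mul_inv
    rw [huu, one_mul, hu]
    abel
  rw [h3] at h2
  have h4 : (e : H →L[ℂ] H) * (1 + C') = (e : H →L[ℂ] H) + C := by
    ext x
    simp [hC'def, ContinuousLinearMap.mul_apply]
  have h5 := weyl_equiv_mul e h2
  rwa [h4] at h5

lemma weyl_decomp {S : H →L[ℂ] H} (h : WeylOp S) :
    ∃ (e : H ≃L[ℂ] H) (C : H →L[ℂ] H), IsCompactOperator ⇑C ∧ S = (e : H →L[ℂ] H) + C := by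
  obtain ⟨hcl, hker, hcoker, hrank⟩ := h
  haveI := hker; haveI := hcoker
  haveI : CompleteSpace (LinearMap.range (S : H →ₗ[ℂ] H)) := hcl.completeSpace_coe
  set R : Submodule ℂ H := LinearMap.range (S : H →ₗ[ℂ] H) with hR
  set M : Submodule ℂ H := Rᗮ with hM
  have hcompl : IsCompl R M := Submodule.isCompl_orthogonal_of_hasOrthogonalProjection
  have eM : (H ⧸ R) ≃ₗ[ℂ] M := Submodule.quotientEquivOfIsCompl R M hcompl
  haveI : FiniteDimensional ℂ M := Module.Finite.equiv eM
  set N : Submodule ℂ H := LinearMap.ker (S : H →ₗ[ℂ] H) with hN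
  haveI : CompleteSpace N := S.isClosed_ker.completeSpace_coe
  have hfr : Module.finrank ℂ N = Module.finrank ℂ M := by
    have h1 : Module.rank ℂ N = Module.rank ℂ M := by rw [hrank, eM.rank_eq]
    rw [← Module.finrank_eq_rank, ← Module.finrank_eq_rank] at h1
    exact_mod_cast h1
  set j : N ≃ₗ[ℂ] M := LinearEquiv.ofFinrankEq _ _ hfr with hj
  set jc : N →L[ℂ] M := LinearMap.toContinuousLinearMap (j : N →ₗ[ℂ] M) with hjc
  set PN := Submodule.orthogonalProjectionOnto N with hPN
  set F : H →L[ℂ] H := M.subtypeL.comp (jc.comp PN) with hF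
  have hFapp : ∀ x : H, F x = ((j (PN x) : M) : H) := by
    intro x
    simp [hF, hjc, LinearMap.coe_toContinuousLinearMap']
  have hFM : ∀ x : H, F x ∈ M := by intro x; rw [hFapp]; exact (j (PN x)).2
  set V : H →L[ℂ] H := S + F with hV
  have hNker : ∀ v : N, S (v : H) = 0 := fun v => v.2
  have hPNself : ∀ v : N, PN (v : H) = v := fun v => Submodule.orthogonalProjectionOnto_mem_subspace_eq_self v
  have hinj : LinearMap.ker (V : H →ₗ[ℂ] H) = ⊥ := by
    rw [Submodule.eq_bot_iff]
    intro x hx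
    have hx0 : S x + F x = 0 := hx
    have hSx0 : S x = 0 := by
      have hxm : S x ∈ M := by
        have hxe : S x = -(F x) := eq_neg_of_add_eq_zero_left hx0
        rw [hxe]; exact M.neg_mem (hFM x)
      exact (Submodule.disjoint_def.1 hcompl.disjoint) (S x) (LinearMap.mem_range_self _ x) hxm
    have hFx0 : F x = 0 := by
      have := hx0; rw [hSx0, zero_add] at this; exact this
    have hxN : x ∈ N := hSx0
    have hPNx : PN x = ⟨x, hxN⟩ := hPNself ⟨x, hxN⟩
    have hj0 : j ⟨x, hxN⟩ = 0 := by
      have : ((j (PN x) : M) : H) = 0 := by rw [← hFapp, hFx0]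
      rw [hPNx] at this
      exact Subtype.ext this
    have : (⟨x, hxN⟩ : N) = 0 := by
      apply j.injective
      rw [hj0, map_zero]
    simpa using congrArg (Subtype.val) this
  have hsurj : LinearMap.range (V : H →ₗ[ℂ] H) = ⊤ := by
    rw [LinearMap.range_eq_top]
    intro y
    have hrR : (Submodule.orthogonalProjectionOnto R y : H) ∈ R := (Submodule.orthogonalProjectionOnto R y).2
    obtain ⟨x₀, hx₀ : S x₀ = _⟩ := hrR
    have hyM : y - (Submodule.orthogonalProjectionOnto R y : H) ∈ M :=
      Submodule.sub_starProjection_mem_orthogonal y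
    set n : N := j.symm ⟨y - (Submodule.orthogonalProjectionOnto R y : H), hyM⟩ with hn
    refine ⟨x₀ - ((PN x₀ : N) : H) + (n : H), ?_⟩
    have hSpart : S (x₀ - ((PN x₀ : N) : H) + (n : H)) = (Submodule.orthogonalProjectionOnto R y : H) := by
      rw [map_add, map_sub, hx₀, hNker (PN x₀), hNker n]
      abel
    have hPNpart : PN (x₀ - ((PN x₀ : N) : H) + (n : H)) = n := by
      rw [map_add, map_sub, hPNself (PN x₀), hPNself n]
      abel
    have hFpart : F (x₀ - ((PN x₀ : N) : H) + (n : H)) = y - (Submodule.orthogonalProjectionOnto R y : H) := by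
      rw [hFapp, hPNpart, hn]
      rw [j.apply_symm_apply]
    show S _ + F _ = y
    rw [hSpart, hFpart]
    abel
  refine ⟨ContinuousLinearEquiv.ofBijective V hinj hsurj, -F, ?_, ?_⟩
  · refine IsCompactOperator.neg ?_
    refine compact_of_finiteRank ?_
    have hle : LinearMap.range (F : H →ₗ[ℂ] H) ≤ M := by
      rintro y ⟨x, rfl⟩; exact hFM x
    exact Submodule.finiteDimensional_of_le hle
  · rw [ContinuousLinearEquiv.coe_ofBijective]
    rw [hV]; abel

lemma weylOp_iff {S : H →L[ℂ] H} : WeylOp S ↔ IsFredholmOp S ∧ indexZero S := by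
  constructor
  · rintro ⟨h1, h2, h3, h4⟩; exact ⟨⟨⟨h1, h2⟩, ⟨h1, h3⟩⟩, h4⟩
  · rintro ⟨⟨⟨h1, h2⟩, ⟨h1', h3⟩⟩, h4⟩; exact ⟨h1, h2, h3, h4⟩

lemma weyl_add_compact {S K : H →L[ℂ] H} (hS : WeylOp S) (hK : IsCompactOperator ⇑K) :
    WeylOp (S + K) := by
  obtain ⟨e, C, hC, rfl⟩ := weyl_decomp hS
  rw [add_assoc]
  refine weyl_equiv_add_compact e ?_
  have : ⇑(C + K) = ⇑C + ⇑K := rfl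
  rw [this]
  exact hC.add hK

lemma opShift_add (T K : H →L[ℂ] H) (lam : ℂ) :
    opShift (T + K) lam = opShift T lam + K := by
  simp only [opShift]; abel

lemma specW_compact_perturb {T K : H →L[ℂ] H} (hK : IsCompactOperator ⇑K) :
    specW (T + K) = specW T := by
  have key : ∀ (T' K' : H →L[ℂ] H), IsCompactOperator ⇑K' → ∀ lam : ℂ,
      WeylOp (opShift T' lam) → WeylOp (opShift (T' + K') lam) := by
    intro T' K' hK' lam hw
    rw [opShift_add]
    exact weyl_add_compact hw hK'
  ext lam
  simp only [specW, Set.mem_setOf_eq, not_iff_not, ← weylOp_iff]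
  constructor
  · intro hw
    have := key (T + K) (-K) (hK.neg) lam hw
    simpa using this
  · intro hw
    exact key T K hK lam hw

lemma weyl_of_unit {S : H →L[ℂ] H} (h : IsUnit S) : WeylOp S := by
  obtain ⟨u, rfl⟩ := h
  have := weyl_unit_mul (u := u) weyl_one
  simpa using this

end AuxWeyl

/-- if `σ_w(T)` has no isolated points then for every compact `K`,
every `λ ∈ E(T+K)` is such that `T + K - λ` is semi-Fredholm of nonpositive index. -/
theorem Eset_compact_perturbation_semiFredholm
    {H : Type*} [NormedAddCommGroup H] [InnerProductSpace ℂ H] [CompleteSpace H]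
    [TopologicalSpace.SeparableSpace H] (hinf : ¬ FiniteDimensional ℂ H)
    (T : H →L[ℂ] H) (hiso : ∀ lam : ℂ, ¬ IsIsolatedIn (specW T) lam) :
    ∀ K : H →L[ℂ] H, IsCompactOperator ⇑K → ∀ lam ∈ Eset (T + K),
      (IsUSF (opShift (T + K) lam) ∨ IsLSF (opShift (T + K) lam)) ∧
        indexNonpos (opShift (T + K) lam) := by
  intro K hK lam hlam
  obtain ⟨⟨hlamspec, ε, hε, hball⟩, -⟩ := hlam
  by_cases hw : WeylOp (opShift (T + K) lam)
  · exact ⟨Or.inl ⟨hw.1, hw.2.1⟩, le_of_eq hw.2.2.2⟩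
  · exfalso
    apply hiso lam
    have hmem : lam ∈ specW (T + K) := by
      simp only [specW, Set.mem_setOf_eq, ← weylOp_iff]
      exact hw
    have hmemT : lam ∈ specW T := by rwa [specW_compact_perturb hK] at hmem
    refine ⟨hmemT, ε, hε, ?_⟩
    apply Set.Subset.antisymm
    · intro z hz
      have hz1 : z ∈ specW (T + K) := by
        rw [specW_compact_perturb hK]; exact hz.1
      have hz2 : z ∈ spectrum ℂ (T + K) := specW_subset_spectrum _ hz1
      have : z ∈ spectrum ℂ (T + K) ∩ Metric.ball lam ε := ⟨hz2, hz.2⟩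
      rwa [hball] at this
    · rintro z hzeq
      rcases hzeq with rfl
      exact ⟨hmemT, Metric.mem_ball_self hε⟩
end
end
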